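/- arXiv:2311.16566 — 2 statements merged into one kernel-verified Lean document; each statement's English description precedes it below -/
import Mathlib

section
/- Let ε ∈ (0, 1] and let n be an integer with εn ≥ 16. Let P be a local property of sequences f : [n] → ℝ, and let f : [n] → ℝ be ε-far from P. Set ℓ = ⌊log_2(εn/4)⌋, let w be the largest integer divisible by 2^ℓ with w ≤ n − εn/4, and let a be any integer with 1 ≤ a ≤ ⌈εn/4⌉. Let T = (T_0, …, T_ℓ) be the a-shifted (ℓ, w)-hierarchical partition of [n], and let U be the set of maximal witness intervals of f with respect to T and P. Then Σ_{i=0}^{ℓ} |T_i ∩ U| / |T_i| ≥ ε/8. -/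
open scoped Classical

/-- A sequence `f` (restricted to positions `1, …, n`) satisfies the local property
characterized by the family `F` of forbidden pairs. -/
def SatLocal (F : Set (ℝ × ℝ)) (n : ℕ) (f : ℕ → ℝ) : Prop :=
  ∀ i : ℕ, 1 ≤ i → i + 1 ≤ n → (f i, f (i + 1)) ∉ F

/-- The interval `[I.1 : I.2]` is a witness interval for `f` (with respect to the
local property characterized by `F`): every sequence agreeing with `f` at those
endpoints of the interval that are not `1` or `n` contains a forbidden consecutive
pair inside the interval. -/
def WitnessInterval (F : Set (ℝ × ℝ)) (n : ℕ) (f : ℕ → ℝ) (I : ℕ × ℕ) : Prop :=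
  ∀ f' : ℕ → ℝ, (1 < I.1 → f' I.1 = f I.1) → (I.2 < n → f' I.2 = f I.2) →
    ∃ i : ℕ, I.1 ≤ i ∧ i + 1 ≤ I.2 ∧ (f' i, f' (i + 1)) ∈ F

/-- Layer `T_i` of the `a`-shifted `(ℓ, w)`-hierarchical partition of `[n]`
(intervals are recorded as pairs of endpoints). -/
def Tlevel (a w n i : ℕ) : Finset (ℕ × ℕ) :=
  ((Finset.Icc 1 (w / 2 ^ i - 2)).image
      (fun j => (a + j * 2 ^ i, a + (j + 1) * 2 ^ i))) ∪
    {(1, a + 2 ^ i), (a + w - 2 ^ i, n)}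

/-- `J` is an ancestor of `I` in the hierarchical partition `(T_0, …, T_ℓ)`:
`I ∈ T_i`, `J ∈ T_j` for levels `i < j ≤ ℓ`, and `I ⊊ J` as intervals. -/
def IsAncestor (a w n ℓ : ℕ) (I J : ℕ × ℕ) : Prop :=
  ∃ i j : ℕ, i < j ∧ j ≤ ℓ ∧ I ∈ Tlevel a w n i ∧ J ∈ Tlevel a w n j ∧
    Set.Icc I.1 I.2 ⊂ Set.Icc J.1 J.2

/-- `I` is a maximal witness: it is a witness interval for `f`, and no ancestor of
`I` in the hierarchical partition is a witness interval. -/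
def MaximalWitness (F : Set (ℝ × ℝ)) (n : ℕ) (f : ℕ → ℝ) (a w ℓ : ℕ)
    (I : ℕ × ℕ) : Prop :=
  WitnessInterval F n f I ∧
    ∀ J : ℕ × ℕ, IsAncestor a w n ℓ I J → ¬ WitnessInterval F n f J

/-- left endpoint of node (i,j) -/
def epL (a i j : ℕ) : ℕ := if j = 0 then 1 else a + j * 2 ^ i

/-- right endpoint of node (i,j) -/
def epR (n a w i j : ℕ) : ℕ := if j + 1 = w / 2 ^ i then n else a + (j + 1) * 2 ^ i

structure Setup (n a w ℓ : ℕ) : Prop where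
  ha : 1 ≤ a
  haw : a + w ≤ n
  hdvd : 2 ^ ℓ ∣ w
  hm2 : 2 ≤ w / 2 ^ ℓ

namespace Setup

variable {n a w ℓ i j : ℕ}

lemma dvd_i (S : Setup n a w ℓ) (hi : i ≤ ℓ) : 2 ^ i ∣ w :=
  dvd_trans (pow_dvd_pow 2 hi) S.hdvd

lemma m2 (S : Setup n a w ℓ) (hi : i ≤ ℓ) : 2 ≤ w / 2 ^ i :=
  le_trans S.hm2 (Nat.div_le_div_left (Nat.pow_le_pow_right (by norm_num) hi)
    (pow_pos (by norm_num) i))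

lemma mul_div (S : Setup n a w ℓ) (hi : i ≤ ℓ) : (w / 2 ^ i) * 2 ^ i = w :=
  Nat.div_mul_cancel (S.dvd_i hi)

lemma m_succ (S : Setup n a w ℓ) (hi : i < ℓ) : w / 2 ^ i = 2 * (w / 2 ^ (i + 1)) := by
  obtain ⟨c, hc⟩ := S.dvd_i (show i + 1 ≤ ℓ from hi)
  subst hc
  rw [Nat.mul_div_cancel_left _ (pow_pos two_pos _)]
  have h : 2 ^ (i + 1) * c = 2 ^ i * (2 * c) := by ring
  rw [h, Nat.mul_div_cancel_left _ (pow_pos two_pos _)]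

lemma jmul_le (S : Setup n a w ℓ) (hi : i ≤ ℓ) (hj : j < w / 2 ^ i) :
    (j + 1) * 2 ^ i ≤ w := by
  calc (j + 1) * 2 ^ i ≤ (w / 2 ^ i) * 2 ^ i := Nat.mul_le_mul_right _ hj
  _ = w := S.mul_div hi

lemma jmul_le' (S : Setup n a w ℓ) (hi : i ≤ ℓ) (hj : j + 1 < w / 2 ^ i) :
    (j + 1) * 2 ^ i + 2 ^ i ≤ w := by
  have h1 : (j + 2) * 2 ^ i ≤ w := S.jmul_le hi hj
  nlinarith [h1]

lemma epL_pos (S : Setup n a w ℓ) : 1 ≤ epL a i j := by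
  unfold epL; split_ifs with h
  · omega
  · have := S.ha; omega

lemma epL_le (S : Setup n a w ℓ) : epL a i j ≤ a + j * 2 ^ i := by
  unfold epL; split_ifs with h
  · have := S.ha; omega
  · omega

lemma epL_ne (hj0 : j ≠ 0) : epL a i j = a + j * 2 ^ i := by
  unfold epL; simp [hj0]

lemma epL_gt_one (S : Setup n a w ℓ) (hj0 : j ≠ 0) : 1 < epL a i j := by
  rw [epL_ne hj0]
  have h1 := S.ha
  have h2 : j * 2 ^ i ≠ 0 := Nat.mul_ne_zero hj0 ((by positivity))
  omega

lemma epR_mid (hj2 : j + 1 ≠ w / 2 ^ i) : epR n a w i j = a + (j + 1) * 2 ^ i := by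
  unfold epR; simp [hj2]

lemma epR_last (hj : j + 1 = w / 2 ^ i) : epR n a w i j = n := by
  unfold epR; simp [hj]

lemma epR_le_n (S : Setup n a w ℓ) (hi : i ≤ ℓ) (hj : j < w / 2 ^ i) :
    epR n a w i j ≤ n := by
  unfold epR; split_ifs with h
  · omega
  · have := S.jmul_le hi hj
    have := S.haw
    omega

lemma epR_lt_n (S : Setup n a w ℓ) (hi : i ≤ ℓ) (hj2 : j + 1 < w / 2 ^ i) :
    epR n a w i j < n := by
  rw [epR_mid (by omega)]
  have h1 := S.jmul_le' hi hj2
  have := S.haw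
  have : 1 ≤ 2 ^ i := Nat.one_le_two_pow
  omega

lemma epL_lt_epR (S : Setup n a w ℓ) (hi : i ≤ ℓ) (hj : j < w / 2 ^ i) :
    epL a i j < epR n a w i j := by
  have hL := S.epL_le (i := i) (j := j)
  have h1 : 1 ≤ 2 ^ i := Nat.one_le_two_pow
  unfold epR; split_ifs with h
  · -- epR = n ; epL ≤ a + j * 2^i ≤ a + w - 2^i < n
    have h2 : (j + 1) * 2 ^ i ≤ w := S.jmul_le hi hj
    have := S.haw
    have : j * 2 ^ i + 2 ^ i ≤ w := by nlinarith
    omega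
  · have hp := S.epL_pos (i := i) (j := j)
    have : j * 2 ^ i < (j + 1) * 2 ^ i := by nlinarith
    omega

lemma epR_eq_epL_succ (hj2 : j + 1 ≠ w / 2 ^ i) :
    epR n a w i j = epL a i (j + 1) := by
  rw [epR_mid hj2, epL_ne (by omega)]

lemma epL_mono (S : Setup n a w ℓ) {j' : ℕ} (hjj : j ≤ j') : epL a i j ≤ epL a i j' := by
  have h1 := S.epL_pos (i := i) (j := j)
  rcases Nat.eq_zero_or_pos j with h | h
  · subst h
    have h0 : epL a i 0 = 1 := by unfold epL; simp
    rw [h0]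
    exact S.epL_pos
  · rw [epL_ne (by omega), epL_ne (by omega)]
    have : j * 2 ^ i ≤ j' * 2 ^ i := Nat.mul_le_mul_right _ hjj
    omega

lemma epL_child : epL a (i + 1) j = epL a i (2 * j) := by
  unfold epL; rcases Nat.eq_zero_or_pos j with h | h
  · subst h; simp
  · have h2 : j ≠ 0 := by omega
    have h3 : 2 * j ≠ 0 := by omega
    simp only [h2, h3, if_neg, if_false]
    ring_nf

lemma epR_child (S : Setup n a w ℓ) (hi : i < ℓ) :
    epR n a w (i + 1) j = epR n a w i (2 * j + 1) := by
  have hm := S.m_succ hi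
  unfold epR
  have : (j + 1 = w / 2 ^ (i + 1)) ↔ (2 * j + 1 + 1 = w / 2 ^ i) := by omega
  split_ifs with h1 h2 h2
  · rfl
  · exact absurd (this.mp h1) h2
  · exact absurd (this.mpr h2) h1
  · ring_nf

lemma epR_epL_mid (S : Setup n a w ℓ) (hi : i < ℓ) (hj : j < w / 2 ^ (i + 1)) :
    epR n a w i (2 * j) = epL a i (2 * j + 1) := by
  have hm := S.m_succ hi
  rw [epR_mid (by omega), epL_ne (by omega)]

lemma last_mul (S : Setup n a w ℓ) (hi : i ≤ ℓ) :
    (w / 2 ^ i - 1) * 2 ^ i = w - 2 ^ i := by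
  rw [Nat.sub_mul, S.mul_div hi, one_mul]

lemma mem_Tlevel_iff (S : Setup n a w ℓ) (hi : i ≤ ℓ) (p : ℕ × ℕ) :
    p ∈ Tlevel a w n i ↔ ∃ j, j < w / 2 ^ i ∧ p = (epL a i j, epR n a w i j) := by
  have hm := S.m2 hi
  have hmw := S.mul_div hi
  have hlast := S.last_mul hi
  have h2p : 1 ≤ 2 ^ i := Nat.one_le_two_pow
  constructor
  · intro hp
    simp only [Tlevel, Finset.mem_union, Finset.mem_image, Finset.mem_Icc,
      Finset.mem_insert, Finset.mem_singleton] at hp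
    rcases hp with ⟨j, ⟨hj1, hj2⟩, rfl⟩ | h | h
    · exact ⟨j, by omega, by rw [epL_ne (by omega), epR_mid (by omega)]⟩
    · refine ⟨0, by omega, ?_⟩
      rw [h]
      have h0 : epL a i 0 = 1 := by unfold epL; simp
      rw [h0, epR_mid (by omega)]
      simp
    · refine ⟨w / 2 ^ i - 1, by omega, ?_⟩
      rw [h, epL_ne (by omega), epR_last (by omega), hlast]
      have : a + (w - 2 ^ i) = a + w - 2 ^ i := by
        have h2 : 2 ^ i ≤ w := by
          calc 2 ^ i = 1 * 2 ^ i := (one_mul _).symm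
          _ ≤ (w / 2 ^ i) * 2 ^ i := Nat.mul_le_mul_right _ (by omega)
          _ = w := hmw
        omega
      rw [this]
  · rintro ⟨j, hj, rfl⟩
    simp only [Tlevel, Finset.mem_union, Finset.mem_image, Finset.mem_Icc,
      Finset.mem_insert, Finset.mem_singleton]
    rcases Nat.eq_zero_or_pos j with h0 | h0
    · subst h0
      right; left
      have h0 : epL a i 0 = 1 := by unfold epL; simp
      rw [h0, epR_mid (by omega)]
      simp
    · rcases Nat.lt_or_ge (j + 1) (w / 2 ^ i) with h1 | h1
      · left
        exact ⟨j, ⟨by omega, by omega⟩, by rw [epL_ne (by omega), epR_mid (by omega)]⟩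
      · right; right
        have hj1 : j + 1 = w / 2 ^ i := by omega
        rw [epL_ne (by omega), epR_last hj1]
        have : j * 2 ^ i = w - 2 ^ i := by
          have : j = w / 2 ^ i - 1 := by omega
          rw [this, hlast]
        rw [this]
        have h2 : 2 ^ i ≤ w := by
          calc 2 ^ i = 1 * 2 ^ i := (one_mul _).symm
          _ ≤ (w / 2 ^ i) * 2 ^ i := Nat.mul_le_mul_right _ (by omega)
          _ = w := hmw
        have : a + (w - 2 ^ i) = a + w - 2 ^ i := by omega
        rw [this]

lemma node_inj (S : Setup n a w ℓ) {i' j' : ℕ} (hi : i ≤ ℓ) (hi' : i' ≤ ℓ)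
    (hj : j < w / 2 ^ i) (hj' : j' < w / 2 ^ i')
    (h : (epL a i j, epR n a w i j) = (epL a i' j', epR n a w i' j')) :
    i = i' ∧ j = j' := by
  have hL : epL a i j = epL a i' j' := congrArg Prod.fst h
  have hR : epR n a w i j = epR n a w i' j' := congrArg Prod.snd h
  have hpow : ∀ b c : ℕ, (2:ℕ) ^ b = 2 ^ c → b = c := fun b c hbc =>
    Nat.pow_right_injective (le_refl 2) hbc
  have h2p : 1 ≤ 2 ^ i := Nat.one_le_two_pow
  have h2p' : 1 ≤ 2 ^ i' := Nat.one_le_two_pow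
  rcases Nat.eq_zero_or_pos j with h0 | h0 <;> rcases Nat.eq_zero_or_pos j' with h0' | h0'
  · subst h0; subst h0'
    have hRR : epR n a w i 0 = epR n a w i' 0 := hR
    rw [epR_mid (by have := S.m2 hi; omega), epR_mid (by have := S.m2 hi'; omega)] at hRR
    have : (2:ℕ) ^ i = 2 ^ i' := by omega
    exact ⟨hpow _ _ this, rfl⟩
  · exfalso
    have h1 : epL a i j = 1 := by subst h0; unfold epL; simp
    rw [h1] at hL
    have := S.epL_gt_one (i := i') (j := j') (by omega)
    omega
  · exfalso
    have h1 : epL a i' j' = 1 := by subst h0'; unfold epL; simp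
    rw [h1] at hL
    have := S.epL_gt_one (i := i) (j := j) (by omega)
    omega
  · rw [epL_ne (by omega), epL_ne (by omega)] at hL
    have hLL : j * 2 ^ i = j' * 2 ^ i' := by omega
    rcases Nat.lt_or_ge (j + 1) (w / 2 ^ i) with h1 | h1 <;>
      rcases Nat.lt_or_ge (j' + 1) (w / 2 ^ i') with h1' | h1'
    · rw [epR_mid (by omega), epR_mid (by omega)] at hR
      have hRR : (j + 1) * 2 ^ i = (j' + 1) * 2 ^ i' := by omega
      have h2 : (2:ℕ) ^ i = 2 ^ i' := by
        have e1 : (j + 1) * 2 ^ i = j * 2 ^ i + 2 ^ i := by ring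
        have e2 : (j' + 1) * 2 ^ i' = j' * 2 ^ i' + 2 ^ i' := by ring
        omega
      have hii : i = i' := hpow _ _ h2
      subst hii
      refine ⟨rfl, ?_⟩
      have := Nat.eq_of_mul_eq_mul_right (show 0 < 2 ^ i by omega) hLL
      omega
    · exfalso
      rw [epR_mid (by omega), epR_last (by omega)] at hR
      have := S.epR_lt_n (i := i) (j := j) hi h1
      rw [epR_mid (by omega)] at this
      omega
    · exfalso
      rw [epR_last (by omega), epR_mid (by omega)] at hR
      have := S.epR_lt_n (i := i') (j := j') hi' h1'
      rw [epR_mid (by omega)] at this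
      omega
    · have hj1 : j + 1 = w / 2 ^ i := by omega
      have hj1' : j' + 1 = w / 2 ^ i' := by omega
      have e1 : j * 2 ^ i = w - 2 ^ i := by
        have : j = w / 2 ^ i - 1 := by omega
        rw [this, S.last_mul hi]
      have e2 : j' * 2 ^ i' = w - 2 ^ i' := by
        have : j' = w / 2 ^ i' - 1 := by omega
        rw [this, S.last_mul hi']
      have h2w : 2 ^ i ≤ w := by
        calc 2 ^ i = 1 * 2 ^ i := (one_mul _).symm
        _ ≤ (w / 2 ^ i) * 2 ^ i := Nat.mul_le_mul_right _ (by omega)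
        _ = w := S.mul_div hi
      have h2w' : 2 ^ i' ≤ w := by
        calc 2 ^ i' = 1 * 2 ^ i' := (one_mul _).symm
        _ ≤ (w / 2 ^ i') * 2 ^ i' := Nat.mul_le_mul_right _ (by omega)
        _ = w := S.mul_div hi'
      have h2 : (2:ℕ) ^ i = 2 ^ i' := by omega
      have hii : i = i' := hpow _ _ h2
      subst hii
      refine ⟨rfl, by omega⟩

lemma Tlevel_card (S : Setup n a w ℓ) (hi : i ≤ ℓ) :
    (Tlevel a w n i).card = w / 2 ^ i := by
  have heq : Tlevel a w n i =
      (Finset.range (w / 2 ^ i)).image (fun j => (epL a i j, epR n a w i j)) := by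
    ext p
    rw [S.mem_Tlevel_iff hi]
    simp only [Finset.mem_image, Finset.mem_range]
    constructor
    · rintro ⟨j, hj, rfl⟩; exact ⟨j, hj, rfl⟩
    · rintro ⟨j, hj, rfl⟩; exact ⟨j, hj, rfl⟩
  rw [heq, Finset.card_image_of_injOn, Finset.card_range]
  intro x hx y hy hxy
  simp only [Finset.coe_range, Set.mem_Iio] at hx hy
  exact (S.node_inj hi hi hx hy hxy).2

lemma parent_step (S : Setup n a w ℓ) {k : ℕ} (hi : i < ℓ) (hk : k < w / 2 ^ i) :
    epL a (i + 1) (k / 2) ≤ epL a i k ∧ epR n a w i k ≤ epR n a w (i + 1) (k / 2) ∧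
      k / 2 < w / 2 ^ (i + 1) := by
  have hm := S.m_succ hi
  have hk2 : k / 2 < w / 2 ^ (i + 1) := by omega
  refine ⟨?_, ?_, hk2⟩
  · have h1 : epL a (i + 1) (k / 2) = epL a i (2 * (k / 2)) := epL_child
    rw [h1]
    exact S.epL_mono (by omega)
  · have h1 : epR n a w (i + 1) (k / 2) = epR n a w i (2 * (k / 2) + 1) := S.epR_child hi
    rw [h1]
    rcases (show k = 2 * (k / 2) ∨ k = 2 * (k / 2) + 1 by omega) with he | he
    · have h2 : epR n a w i (2 * (k / 2)) = epL a i (2 * (k / 2) + 1) :=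
        S.epR_epL_mid hi hk2
      calc epR n a w i k = epL a i (2 * (k / 2) + 1) := by rw [← h2, ← he]
      _ ≤ epR n a w i (2 * (k / 2) + 1) := le_of_lt (S.epL_lt_epR (by omega) (by omega))
    · rw [← he]

lemma m_eq (S : Setup n a w ℓ) (hi : i ≤ ℓ) :
    w / 2 ^ i = (w / 2 ^ ℓ) * 2 ^ (ℓ - i) := by
  obtain ⟨c, hc⟩ := S.hdvd
  subst hc
  rw [Nat.mul_div_cancel_left _ (pow_pos two_pos _)]
  have he : (2:ℕ) ^ ℓ * c = 2 ^ i * (c * 2 ^ (ℓ - i)) := by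
    have h1 : (2:ℕ) ^ ℓ = 2 ^ i * 2 ^ (ℓ - i) := by
      rw [← pow_add]
      congr 1
      omega
    rw [h1]
    ring
  rw [he, Nat.mul_div_cancel_left _ (pow_pos two_pos _)]

/-- chain containment: the ancestor at level `i + d` on the chain of `(i,k)` contains it -/
lemma chain_sub (S : Setup n a w ℓ) {k : ℕ} (d : ℕ) (hi : i + d ≤ ℓ) (hk : k < w / 2 ^ i) :
    epL a (i + d) (k / 2 ^ d) ≤ epL a i k ∧
      epR n a w i k ≤ epR n a w (i + d) (k / 2 ^ d) ∧ k / 2 ^ d < w / 2 ^ (i + d) := by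
  induction d with
  | zero =>
    simp only [pow_zero, Nat.div_one, Nat.add_zero]
    exact ⟨le_refl _, le_refl _, hk⟩
  | succ d ih =>
    obtain ⟨h1, h2, h3⟩ := ih (by omega)
    obtain ⟨g1, g2, g3⟩ := S.parent_step (i := i + d) (by omega) h3
    have he : k / 2 ^ (d + 1) = k / 2 ^ d / 2 := by
      rw [pow_succ, Nat.div_div_eq_div_mul]
    have he2 : i + (d + 1) = (i + d) + 1 := by omega
    rw [he, he2]
    exact ⟨le_trans g1 h1, le_trans h2 g2, g3⟩

/-- two nodes at the same level: separation -/
lemma sep (S : Setup n a w ℓ) {j' : ℕ} (hi : i ≤ ℓ) (hjj : j < j') (hj' : j' < w / 2 ^ i) :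
    epR n a w i j ≤ epL a i j' := by
  have h1 : epR n a w i j = epL a i (j + 1) := epR_eq_epL_succ (by omega)
  rw [h1]
  exact S.epL_mono (by omega)

/-- a strict (or not) containment between nodes forces the chain relation -/
lemma contained_eq_chain (S : Setup n a w ℓ) {i' k : ℕ} (hii : i < i') (hi' : i' ≤ ℓ)
    (hj : j < w / 2 ^ i) (hk : k < w / 2 ^ i')
    (hL : epL a i' k ≤ epL a i j) (hR : epR n a w i j ≤ epR n a w i' k) :
    k = j / 2 ^ (i' - i) := by
  obtain ⟨c1, c2, c3⟩ := S.chain_sub (i' - i) (by omega) hj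
  have hii' : i + (i' - i) = i' := by omega
  rw [hii'] at c1 c2 c3
  by_contra hne
  have hLR := S.epL_lt_epR (by omega) hj
  rcases Nat.lt_or_ge k (j / 2 ^ (i' - i)) with h | h
  · have := S.sep hi' h c3
    omega
  · have := S.sep hi' (show j / 2 ^ (i' - i) < k by omega) hk
    omega

end Setup

/-- chain-maximal witness: witness node all of whose chain ancestors are non-witnesses -/
def MW (F : Set (ℝ × ℝ)) (f : ℕ → ℝ) (n a w ℓ i k : ℕ) : Prop :=
  WitnessInterval F n f (epL a i k, epR n a w i k) ∧
    ∀ i', i < i' → i' ≤ ℓ →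
      ¬ WitnessInterval F n f
        (epL a i' (k / 2 ^ (i' - i)), epR n a w i' (k / 2 ^ (i' - i)))

lemma MW_maximal {F : Set (ℝ × ℝ)} {f : ℕ → ℝ} {n a w ℓ i k : ℕ}
    (S : Setup n a w ℓ) (hi : i ≤ ℓ) (hk : k < w / 2 ^ i)
    (h : MW F f n a w ℓ i k) :
    MaximalWitness F n f a w ℓ (epL a i k, epR n a w i k) := by
  refine ⟨h.1, ?_⟩
  rintro J ⟨i₀, j₀, hij, hj₀, hI, hJ, hIJ⟩
  obtain ⟨k₁, hk₁, hIeq⟩ := (S.mem_Tlevel_iff (show i₀ ≤ ℓ by omega) _).mp hI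
  obtain ⟨hii₀, hkk₁⟩ := S.node_inj hi (show i₀ ≤ ℓ by omega) hk hk₁ hIeq
  obtain ⟨k₂, hk₂, hJeq⟩ := (S.mem_Tlevel_iff hj₀ _).mp hJ
  subst hii₀
  subst hkk₁
  subst hJeq
  have hLR : epL a i k ≤ epR n a w i k := le_of_lt (S.epL_lt_epR hi hk)
  have hsub : epL a j₀ k₂ ≤ epL a i k ∧ epR n a w i k ≤ epR n a w j₀ k₂ := by
    have h1 := subset_of_ssubset hIJ
    simp only at h1
    rw [Set.Icc_subset_Icc_iff hLR] at h1
    exact h1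
  have hc : k₂ = k / 2 ^ (j₀ - i) :=
    S.contained_eq_chain hij hj₀ hk hk₂ hsub.1 hsub.2
  subst hc
  exact h.2 j₀ hij hj₀

lemma not_witness {F : Set (ℝ × ℝ)} {n : ℕ} {f : ℕ → ℝ} {I : ℕ × ℕ}
    (h : ¬ WitnessInterval F n f I) :
    ∃ g : ℕ → ℝ, (1 < I.1 → g I.1 = f I.1) ∧ (I.2 < n → g I.2 = f I.2) ∧
      ∀ i, I.1 ≤ i → i + 1 ≤ I.2 → (g i, g (i + 1)) ∉ F := by
  unfold WitnessInterval at h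
  push_neg at h
  obtain ⟨g, h1, h2, h3⟩ := h
  exact ⟨g, h1, h2, fun i hi1 hi2 => h3 i hi1 hi2⟩

/-- a good completion on the interval `[b, c]`, when it exists -/
noncomputable def pickF (F : Set (ℝ × ℝ)) (n : ℕ) (f : ℕ → ℝ) (b c : ℕ) : ℕ → ℝ :=
  if h : WitnessInterval F n f (b, c) then f else (not_witness h).choose

lemma pickF_spec {F : Set (ℝ × ℝ)} {n : ℕ} {f : ℕ → ℝ} {b c : ℕ}
    (h : ¬ WitnessInterval F n f (b, c)) :
    (1 < b → pickF F n f b c b = f b) ∧ (c < n → pickF F n f b c c = f c) ∧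
      ∀ i, b ≤ i → i + 1 ≤ c → (pickF F n f b c i, pickF F n f b c (i + 1)) ∉ F := by
  unfold pickF
  rw [dif_neg h]
  exact (not_witness h).choose_spec

/-- the recursively repaired function on node `(i, j)` -/
noncomputable def rep (F : Set (ℝ × ℝ)) (f : ℕ → ℝ) (n a w : ℕ) : ℕ → ℕ → ℕ → ℝ
  | 0, j => pickF F n f (epL a 0 j) (epR n a w 0 j)
  | (i + 1), j =>
    if WitnessInterval F n f (epL a i (2 * j), epR n a w i (2 * j)) ∨
        WitnessInterval F n f (epL a i (2 * j + 1), epR n a w i (2 * j + 1)) then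
      pickF F n f (epL a (i + 1) j) (epR n a w (i + 1) j)
    else fun p => if p ≤ epR n a w i (2 * j) then rep F f n a w i (2 * j) p
      else rep F f n a w i (2 * j + 1) p

/-- total weight of chain-maximal witnesses strictly inside the subtree of `(i, j)` -/
noncomputable def chargeSum (F : Set (ℝ × ℝ)) (f : ℕ → ℝ) (n a w ℓ i j : ℕ) : ℕ :=
  ∑ i' ∈ Finset.range i, ∑ k ∈ Finset.range (w / 2 ^ i'),
    if k / 2 ^ (i - i') = j ∧ MW F f n a w ℓ i' k then 2 ^ i' else 0

lemma charge_child (F : Set (ℝ × ℝ)) (f : ℕ → ℝ) (n a w ℓ : ℕ) (i j : ℕ) :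
    chargeSum F f n a w ℓ i (2 * j) + chargeSum F f n a w ℓ i (2 * j + 1) ≤
      chargeSum F f n a w ℓ (i + 1) j := by
  unfold chargeSum
  rw [Finset.sum_range_succ]
  have hmain : ∀ i' ∈ Finset.range i,
      ((∑ k ∈ Finset.range (w / 2 ^ i'),
          if k / 2 ^ (i - i') = 2 * j ∧ MW F f n a w ℓ i' k then 2 ^ i' else 0) +
        ∑ k ∈ Finset.range (w / 2 ^ i'),
          if k / 2 ^ (i - i') = 2 * j + 1 ∧ MW F f n a w ℓ i' k then 2 ^ i' else 0) ≤
      ∑ k ∈ Finset.range (w / 2 ^ i'),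
        if k / 2 ^ (i + 1 - i') = j ∧ MW F f n a w ℓ i' k then 2 ^ i' else 0 := by
    intro i' hi'
    simp only [Finset.mem_range] at hi'
    rw [← Finset.sum_add_distrib]
    apply Finset.sum_le_sum
    intro k _
    have hdd : k / 2 ^ (i + 1 - i') = k / 2 ^ (i - i') / 2 := by
      have he : i + 1 - i' = (i - i') + 1 := by omega
      rw [Nat.div_div_eq_div_mul, ← pow_succ, he]
    by_cases hM : MW F f n a w ℓ i' k
    · by_cases hA : k / 2 ^ (i - i') = 2 * j
      · have hC : k / 2 ^ (i + 1 - i') = j := by rw [hdd, hA]; omega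
        have hB : ¬ (k / 2 ^ (i - i') = 2 * j + 1) := by omega
        simp [hA, hB, hC, hM]
      · by_cases hB : k / 2 ^ (i - i') = 2 * j + 1
        · have hC : k / 2 ^ (i + 1 - i') = j := by rw [hdd, hB]; omega
          simp [hA, hB, hC, hM]
        · simp [hA, hB]
    · simp [hM]
  rw [← Finset.sum_add_distrib]
  exact le_trans (Finset.sum_le_sum hmain) (Nat.le_add_right _ _)

lemma charge_single (F : Set (ℝ × ℝ)) (f : ℕ → ℝ) (n a w ℓ : ℕ) {i c j : ℕ}
    (hc : c < w / 2 ^ i) (hcj : c / 2 = j) (hMW : MW F f n a w ℓ i c) :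
    2 ^ i ≤ chargeSum F f n a w ℓ (i + 1) j := by
  unfold chargeSum
  have e1 : i + 1 - i = 1 := by omega
  have h1 : 2 ^ i ≤ ∑ k ∈ Finset.range (w / 2 ^ i),
      if k / 2 ^ (i + 1 - i) = j ∧ MW F f n a w ℓ i k then 2 ^ i else 0 := by
    have h0 := Finset.single_le_sum
      (f := fun k => if k / 2 ^ (i + 1 - i) = j ∧ MW F f n a w ℓ i k then 2 ^ i else 0)
      (fun k _ => Nat.zero_le _) (Finset.mem_range.mpr hc)
    simpa [e1, hcj, hMW] using h0
  have h2 := Finset.single_le_sum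
    (f := fun i' => ∑ k ∈ Finset.range (w / 2 ^ i'),
      if k / 2 ^ (i + 1 - i') = j ∧ MW F f n a w ℓ i' k then 2 ^ i' else 0)
    (fun _ hx => Nat.zero_le _) (Finset.mem_range.mpr (Nat.lt_succ_self i))
  exact le_trans h1 h2

lemma rep_zero (F : Set (ℝ × ℝ)) (f : ℕ → ℝ) (n a w j : ℕ) :
    rep F f n a w 0 j = pickF F n f (epL a 0 j) (epR n a w 0 j) := rfl

lemma rep_succ (F : Set (ℝ × ℝ)) (f : ℕ → ℝ) (n a w i j : ℕ) :
    rep F f n a w (i + 1) j =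
      if WitnessInterval F n f (epL a i (2 * j), epR n a w i (2 * j)) ∨
          WitnessInterval F n f (epL a i (2 * j + 1), epR n a w i (2 * j + 1)) then
        pickF F n f (epL a (i + 1) j) (epR n a w (i + 1) j)
      else fun p => if p ≤ epR n a w i (2 * j) then rep F f n a w i (2 * j) p
        else rep F f n a w i (2 * j + 1) p := rfl

lemma direct_cost {n a w ℓ i j : ℕ} {F : Set (ℝ × ℝ)} {f : ℕ → ℝ}
    (S : Setup n a w ℓ) (hi : i ≤ ℓ) (hj : j < w / 2 ^ i)
    (hnw : ¬ WitnessInterval F n f (epL a i j, epR n a w i j)) :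
    ((Finset.Icc (epL a i j) (epR n a w i j)).filter
        (fun p => pickF F n f (epL a i j) (epR n a w i j) p ≠ f p)).card ≤
      (if j = 0 then a else 0) + (if j + 1 = w / 2 ^ i then n + 1 - (a + w) else 0)
        + (2 ^ i - 1) := by
  obtain ⟨s1, s2, s3⟩ := pickF_spec hnw
  have hm := S.m2 hi
  have h2p : 1 ≤ 2 ^ i := Nat.one_le_two_pow
  have h2w : 2 ^ i ≤ w := by
    have := S.mul_div hi
    nlinarith
  have haw := S.haw
  rcases Nat.eq_zero_or_pos j with h0 | h0
  · -- left node
    subst h0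
    have hL : epL a i 0 = 1 := by unfold epL; simp
    have hR : epR n a w i 0 = a + 1 * 2 ^ i := Setup.epR_mid (by omega)
    have hRn : epR n a w i 0 < n := S.epR_lt_n hi (by omega)
    have hgR := s2 hRn
    have hsub : (Finset.Icc (epL a i 0) (epR n a w i 0)).filter
        (fun p => pickF F n f (epL a i 0) (epR n a w i 0) p ≠ f p) ⊆
        Finset.Icc 1 (a + 2 ^ i - 1) := by
      intro p hp
      rw [Finset.mem_filter, Finset.mem_Icc] at hp
      rw [Finset.mem_Icc]
      have hpR : p ≠ epR n a w i 0 := by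
        intro he; exact hp.2 (he ▸ hgR)
      omega
    have := Finset.card_le_card hsub
    rw [Nat.card_Icc] at this
    split_ifs <;> omega
  · rcases Nat.lt_or_ge (j + 1) (w / 2 ^ i) with h1 | h1
    · -- middle node
      have hL : epL a i j = a + j * 2 ^ i := Setup.epL_ne (by omega)
      have hR : epR n a w i j = a + (j + 1) * 2 ^ i := Setup.epR_mid (by omega)
      have hL1 : 1 < epL a i j := S.epL_gt_one (by omega)
      have hRn : epR n a w i j < n := S.epR_lt_n hi h1
      have hgL := s1 hL1
      have hgR := s2 hRn
      have hd : epR n a w i j = epL a i j + 2 ^ i := by rw [hL, hR]; ring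
      have hsub : (Finset.Icc (epL a i j) (epR n a w i j)).filter
          (fun p => pickF F n f (epL a i j) (epR n a w i j) p ≠ f p) ⊆
          Finset.Icc (epL a i j + 1) (epR n a w i j - 1) := by
        intro p hp
        rw [Finset.mem_filter, Finset.mem_Icc] at hp
        rw [Finset.mem_Icc]
        have hpR : p ≠ epR n a w i j := by intro he; exact hp.2 (he ▸ hgR)
        have hpL : p ≠ epL a i j := by intro he; exact hp.2 (he ▸ hgL)
        omega
      have := Finset.card_le_card hsub
      rw [Nat.card_Icc] at this
      split_ifs <;> omega
    · -- right node
      have hj1 : j + 1 = w / 2 ^ i := by omega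
      have hjv : j * 2 ^ i = w - 2 ^ i := by
        have : j = w / 2 ^ i - 1 := by omega
        rw [this, S.last_mul hi]
      have hL : epL a i j = a + j * 2 ^ i := Setup.epL_ne (by omega)
      have hR : epR n a w i j = n := Setup.epR_last hj1
      have hL1 : 1 < epL a i j := S.epL_gt_one (by omega)
      have hgL := s1 hL1
      have hsub : (Finset.Icc (epL a i j) (epR n a w i j)).filter
          (fun p => pickF F n f (epL a i j) (epR n a w i j) p ≠ f p) ⊆
          Finset.Icc (epL a i j + 1) n := by
        intro p hp
        rw [Finset.mem_filter, Finset.mem_Icc] at hp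
        rw [Finset.mem_Icc]
        have hpL : p ≠ epL a i j := by intro he; exact hp.2 (he ▸ hgL)
        omega
      have := Finset.card_le_card hsub
      rw [Nat.card_Icc] at this
      split_ifs <;> omega

lemma rep_spec {n a w ℓ : ℕ} {F : Set (ℝ × ℝ)} {f : ℕ → ℝ} (S : Setup n a w ℓ) :
    ∀ i, i ≤ ℓ → ∀ j, j < w / 2 ^ i →
    (∀ i', i ≤ i' → i' ≤ ℓ →
      ¬ WitnessInterval F n f
        (epL a i' (j / 2 ^ (i' - i)), epR n a w i' (j / 2 ^ (i' - i)))) →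
    (1 < epL a i j → rep F f n a w i j (epL a i j) = f (epL a i j)) ∧
    (epR n a w i j < n → rep F f n a w i j (epR n a w i j) = f (epR n a w i j)) ∧
    (∀ p, epL a i j ≤ p → p + 1 ≤ epR n a w i j →
      (rep F f n a w i j p, rep F f n a w i j (p + 1)) ∉ F) ∧
    ((Finset.Icc (epL a i j) (epR n a w i j)).filter
        (fun p => rep F f n a w i j p ≠ f p)).card ≤
      (if j = 0 then a else 0) + (if j + 1 = w / 2 ^ i then n + 1 - (a + w) else 0)
        + 2 * chargeSum F f n a w ℓ i j := by
  intro i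
  induction i with
  | zero =>
    intro _ j hj hclean
    have hnw : ¬ WitnessInterval F n f (epL a 0 j, epR n a w 0 j) := by
      have h := hclean 0 (le_refl 0) (Nat.zero_le ℓ)
      simpa using h
    obtain ⟨s1, s2, s3⟩ := pickF_spec hnw
    rw [rep_zero]
    refine ⟨s1, s2, s3, ?_⟩
    have hdc := direct_cost S (Nat.zero_le _) hj hnw
    have h20 : (2:ℕ) ^ 0 - 1 = 0 := rfl
    omega
  | succ i ih =>
    intro hi j hj hclean
    have hm1 := S.m_succ (show i < ℓ by omega)
    have hc1 : 2 * j < w / 2 ^ i := by omega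
    have hc2 : 2 * j + 1 < w / 2 ^ i := by omega
    have hnw : ¬ WitnessInterval F n f (epL a (i + 1) j, epR n a w (i + 1) j) := by
      have h := hclean (i + 1) (le_refl _) hi
      simpa using h
    by_cases hcw : WitnessInterval F n f (epL a i (2 * j), epR n a w i (2 * j)) ∨
        WitnessInterval F n f (epL a i (2 * j + 1), epR n a w i (2 * j + 1))
    · -- direct repair
      rw [rep_succ, if_pos hcw]
      obtain ⟨s1, s2, s3⟩ := pickF_spec hnw
      refine ⟨s1, s2, s3, ?_⟩
      have hdc := direct_cost S hi hj hnw
      have hcharge : 2 ^ i ≤ chargeSum F f n a w ℓ (i + 1) j := by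
        rcases hcw with hcw | hcw
        · refine charge_single F f n a w ℓ hc1 (by omega) ⟨hcw, ?_⟩
          intro i' hii' hi'l
          have h1 : i' - i = (i' - (i + 1)) + 1 := by omega
          have he : 2 * j / 2 ^ (i' - i) = j / 2 ^ (i' - (i + 1)) := by
            rw [h1, pow_succ', ← Nat.div_div_eq_div_mul]
            congr 1
            omega
          rw [he]
          exact hclean i' (by omega) hi'l
        · refine charge_single F f n a w ℓ hc2 (by omega) ⟨hcw, ?_⟩
          intro i' hii' hi'l
          have h1 : i' - i = (i' - (i + 1)) + 1 := by omega
          have he : (2 * j + 1) / 2 ^ (i' - i) = j / 2 ^ (i' - (i + 1)) := by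
            rw [h1, pow_succ', ← Nat.div_div_eq_div_mul]
            congr 1
            omega
          rw [he]
          exact hclean i' (by omega) hi'l
      have h2p : (1:ℕ) ≤ 2 ^ i := Nat.one_le_two_pow
      have hpow : (2:ℕ) ^ (i + 1) = 2 * 2 ^ i := by ring
      omega
    · -- glue
      have hre : ∀ p, rep F f n a w (i + 1) j p =
          if p ≤ epR n a w i (2 * j) then rep F f n a w i (2 * j) p
          else rep F f n a w i (2 * j + 1) p := by
        intro p
        rw [rep_succ, if_neg hcw]
      push_neg at hcw
      obtain ⟨hnw1, hnw2⟩ := hcw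
      have hclean1 : ∀ i', i ≤ i' → i' ≤ ℓ → ¬ WitnessInterval F n f
          (epL a i' (2 * j / 2 ^ (i' - i)), epR n a w i' (2 * j / 2 ^ (i' - i))) := by
        intro i' h1 h2
        rcases eq_or_lt_of_le h1 with rfl | h3
        · simpa using hnw1
        · have h4 : i' - i = (i' - (i + 1)) + 1 := by omega
          have he : 2 * j / 2 ^ (i' - i) = j / 2 ^ (i' - (i + 1)) := by
            rw [h4, pow_succ', ← Nat.div_div_eq_div_mul]
            congr 1
            omega
          rw [he]
          exact hclean i' (by omega) h2
      have hclean2 : ∀ i', i ≤ i' → i' ≤ ℓ → ¬ WitnessInterval F n f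
          (epL a i' ((2 * j + 1) / 2 ^ (i' - i)), epR n a w i' ((2 * j + 1) / 2 ^ (i' - i))) := by
        intro i' h1 h2
        rcases eq_or_lt_of_le h1 with rfl | h3
        · simpa using hnw2
        · have h4 : i' - i = (i' - (i + 1)) + 1 := by omega
          have he : (2 * j + 1) / 2 ^ (i' - i) = j / 2 ^ (i' - (i + 1)) := by
            rw [h4, pow_succ', ← Nat.div_div_eq_div_mul]
            congr 1
            omega
          rw [he]
          exact hclean i' (by omega) h2
      obtain ⟨A1, A2, A3, A4⟩ := ih (by omega) (2 * j) hc1 hclean1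
      obtain ⟨B1, B2, B3, B4⟩ := ih (by omega) (2 * j + 1) hc2 hclean2
      have eL : epL a (i + 1) j = epL a i (2 * j) := Setup.epL_child
      have eR : epR n a w (i + 1) j = epR n a w i (2 * j + 1) := S.epR_child (by omega)
      have eM : epR n a w i (2 * j) = epL a i (2 * j + 1) := S.epR_epL_mid (by omega) (by omega)
      have hLM : epL a i (2 * j) < epR n a w i (2 * j) := S.epL_lt_epR (by omega) hc1
      have hMR : epR n a w i (2 * j) < epR n a w i (2 * j + 1) := by
        rw [eM]
        exact S.epL_lt_epR (by omega) hc2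
      have hMn : epR n a w i (2 * j) < n := S.epR_lt_n (by omega) (by omega)
      have hM1 : 1 < epR n a w i (2 * j) := by
        rw [eM]
        exact S.epL_gt_one (by omega)
      refine ⟨?_, ?_, ?_, ?_⟩
      · intro h1
        rw [eL] at h1 ⊢
        rw [hre, if_pos (le_of_lt hLM)]
        exact A1 h1
      · intro h2
        rw [eR] at h2 ⊢
        rw [hre, if_neg (by omega)]
        exact B2 h2
      · intro p hp1 hp2
        rw [eL] at hp1
        rw [eR] at hp2
        rw [hre p, hre (p + 1)]
        rcases le_or_gt (p + 1) (epR n a w i (2 * j)) with h | h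
        · rw [if_pos (by omega), if_pos h]
          exact A3 p hp1 h
        · rcases le_or_gt p (epR n a w i (2 * j)) with h' | h'
          · have hpM : p = epR n a w i (2 * j) := by omega
            rw [if_pos h', if_neg (by omega)]
            have e1 : rep F f n a w i (2 * j) p = f p := by rw [hpM]; exact A2 hMn
            have e2 : rep F f n a w i (2 * j + 1) p = f p := by
              rw [hpM, eM]
              exact B1 (by rw [← eM]; exact hM1)
            have h3 := B3 p (by rw [← eM]; omega) hp2
            rw [e1, ← e2]
            exact h3
          · rw [if_neg (by omega), if_neg (by omega)]
            exact B3 p (by rw [← eM]; omega) hp2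
      · -- cost
        have hsub : (Finset.Icc (epL a (i + 1) j) (epR n a w (i + 1) j)).filter
              (fun p => rep F f n a w (i + 1) j p ≠ f p) ⊆
            ((Finset.Icc (epL a i (2 * j)) (epR n a w i (2 * j))).filter
              (fun p => rep F f n a w i (2 * j) p ≠ f p)) ∪
            ((Finset.Icc (epL a i (2 * j + 1)) (epR n a w i (2 * j + 1))).filter
              (fun p => rep F f n a w i (2 * j + 1) p ≠ f p)) := by
          intro p hp
          rw [Finset.mem_filter, Finset.mem_Icc] at hp
          rw [Finset.mem_union, Finset.mem_filter, Finset.mem_filter,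
            Finset.mem_Icc, Finset.mem_Icc]
          obtain ⟨⟨hp1, hp2⟩, hp3⟩ := hp
          rw [hre p] at hp3
          rw [eL] at hp1
          rw [eR] at hp2
          rcases le_or_gt p (epR n a w i (2 * j)) with h | h
          · left
            refine ⟨⟨hp1, h⟩, ?_⟩
            rwa [if_pos h] at hp3
          · right
            refine ⟨⟨by rw [← eM]; omega, hp2⟩, ?_⟩
            rwa [if_neg (by omega)] at hp3
        have hcard := Finset.card_le_card hsub
        have hcu := Finset.card_union_le
          ((Finset.Icc (epL a i (2 * j)) (epR n a w i (2 * j))).filter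
            (fun p => rep F f n a w i (2 * j) p ≠ f p))
          ((Finset.Icc (epL a i (2 * j + 1)) (epR n a w i (2 * j + 1))).filter
            (fun p => rep F f n a w i (2 * j + 1) p ≠ f p))
        have hch := charge_child F f n a w ℓ i j
        have i1 : (if 2 * j = 0 then a else 0) = (if j = 0 then a else 0) := by
          split_ifs <;> omega
        have i2 : (if 2 * j + 1 = w / 2 ^ i then n + 1 - (a + w) else 0) = 0 :=
          if_neg (by omega)
        have i3 : (if 2 * j + 1 = 0 then a else 0) = 0 := if_neg (by omega)
        have i4 : (if 2 * j + 1 + 1 = w / 2 ^ i then n + 1 - (a + w) else 0) =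
            (if j + 1 = w / 2 ^ (i + 1) then n + 1 - (a + w) else 0) := by
          split_ifs <;> omega
        omega

/-- index of a top-level node containing `p` -/
def topIdx (a w ℓ p : ℕ) : ℕ :=
  if p ≤ a then 0 else min (w / 2 ^ ℓ - 1) ((p - a) / 2 ^ ℓ)

lemma topIdx_mem {n a w ℓ p : ℕ} (S : Setup n a w ℓ) (hp1 : 1 ≤ p) (hp2 : p ≤ n) :
    topIdx a w ℓ p < w / 2 ^ ℓ ∧ epL a ℓ (topIdx a w ℓ p) ≤ p ∧
      p ≤ epR n a w ℓ (topIdx a w ℓ p) := by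
  have hm := S.m2 (le_refl ℓ)
  have h2p : 1 ≤ 2 ^ ℓ := Nat.one_le_two_pow
  have h2w : 2 ^ ℓ ≤ w := by
    have := S.mul_div (le_refl ℓ)
    nlinarith
  have haw := S.haw
  have hL0 : epL a ℓ 0 = 1 := by unfold epL; simp
  unfold topIdx
  split_ifs with h
  · refine ⟨by omega, by omega, ?_⟩
    rw [Setup.epR_mid (by omega)]
    have := S.ha
    omega
  · set q := (p - a) / 2 ^ ℓ with hq
    have hq1 : q * 2 ^ ℓ ≤ p - a := Nat.div_mul_le_self _ _
    have hq2 : p - a < (q + 1) * 2 ^ ℓ :=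
      (Nat.div_lt_iff_lt_mul (by omega)).mp (Nat.lt_succ_self q)
    rcases Nat.lt_or_ge q (w / 2 ^ ℓ - 1) with h1 | h1
    · rw [min_eq_right (by omega)]
      refine ⟨by omega, ?_, ?_⟩
      · rcases Nat.eq_zero_or_pos q with h0 | h0
        · rw [h0, hL0]; omega
        · rw [Setup.epL_ne (by omega)]; omega
      · rw [Setup.epR_mid (by omega)]
        omega
    · rw [min_eq_left (by omega)]
      have hlast := S.last_mul (le_refl ℓ)
      refine ⟨by omega, ?_, ?_⟩
      · rw [Setup.epL_ne (by omega), hlast]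
        have : (w / 2 ^ ℓ - 1) * 2 ^ ℓ ≤ q * 2 ^ ℓ := Nat.mul_le_mul_right _ h1
        omega
      · rw [Setup.epR_last (by omega)]
        omega

lemma global_bound {n a w ℓ : ℕ} {F : Set (ℝ × ℝ)} {f : ℕ → ℝ} (S : Setup n a w ℓ)
    (htop : ∀ k, k < w / 2 ^ ℓ → ¬ WitnessInterval F n f (epL a ℓ k, epR n a w ℓ k)) :
    ∃ f' : ℕ → ℝ, SatLocal F n f' ∧
      ((Finset.Icc 1 n).filter (fun x => f' x ≠ f x)).card ≤
        a + (n + 1 - (a + w)) + 2 * ∑ i' ∈ Finset.range ℓ,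
          2 ^ i' * ((Tlevel a w n i').filter (MaximalWitness F n f a w ℓ)).card := by
  have hm := S.m2 (le_refl ℓ)
  have hspec : ∀ k, k < w / 2 ^ ℓ →
      (1 < epL a ℓ k → rep F f n a w ℓ k (epL a ℓ k) = f (epL a ℓ k)) ∧
      (epR n a w ℓ k < n → rep F f n a w ℓ k (epR n a w ℓ k) = f (epR n a w ℓ k)) ∧
      (∀ p, epL a ℓ k ≤ p → p + 1 ≤ epR n a w ℓ k →
        (rep F f n a w ℓ k p, rep F f n a w ℓ k (p + 1)) ∉ F) ∧
      ((Finset.Icc (epL a ℓ k) (epR n a w ℓ k)).filter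
          (fun p => rep F f n a w ℓ k p ≠ f p)).card ≤
        (if k = 0 then a else 0) + (if k + 1 = w / 2 ^ ℓ then n + 1 - (a + w) else 0)
          + 2 * chargeSum F f n a w ℓ ℓ k := by
    intro k hk
    refine rep_spec S ℓ (le_refl _) k hk ?_
    intro i' h1 h2
    have he : i' = ℓ := le_antisymm h2 h1
    subst he
    simpa using htop k hk
  have hagree : ∀ p k, 1 ≤ p → p ≤ n → k < w / 2 ^ ℓ → epL a ℓ k ≤ p →
      p ≤ epR n a w ℓ k →
      rep F f n a w ℓ (topIdx a w ℓ p) p = rep F f n a w ℓ k p := by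
    intro p k hp1 hp2 hk hkL hkR
    obtain ⟨ht1, ht2, ht3⟩ := topIdx_mem S hp1 hp2
    rcases Nat.lt_trichotomy (topIdx a w ℓ p) k with h | h | h
    · have hsep := S.sep (le_refl ℓ) h hk
      have hpe : p = epR n a w ℓ (topIdx a w ℓ p) := by omega
      have hpe2 : p = epL a ℓ k := by omega
      have hj₀n : epR n a w ℓ (topIdx a w ℓ p) < n := S.epR_lt_n (le_refl ℓ) (by omega)
      have e1 : rep F f n a w ℓ (topIdx a w ℓ p) p = f p := by
        have h7 := (hspec _ ht1).2.1 hj₀n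
        rw [← hpe] at h7
        exact h7
      have e2 : rep F f n a w ℓ k p = f p := by
        have h7 : 1 < epL a ℓ k := by
          have h5 := S.epL_lt_epR (le_refl ℓ) ht1
          have h6 := S.epL_pos (i := ℓ) (j := topIdx a w ℓ p)
          omega
        have h8 := (hspec k hk).1 h7
        rw [← hpe2] at h8
        exact h8
      rw [e1, e2]
    · rw [h]
    · have hsep := S.sep (le_refl ℓ) h ht1
      have hpe : p = epR n a w ℓ k := by omega
      have hpe2 : p = epL a ℓ (topIdx a w ℓ p) := by omega
      have hkn : epR n a w ℓ k < n := S.epR_lt_n (le_refl ℓ) (by omega)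
      have e1 : rep F f n a w ℓ (topIdx a w ℓ p) p = f p := by
        have h7 : 1 < epL a ℓ (topIdx a w ℓ p) := by
          have h5 := S.epL_lt_epR (le_refl ℓ) hk
          have h6 := S.epL_pos (i := ℓ) (j := k)
          omega
        have h8 := (hspec _ ht1).1 h7
        rw [← hpe2] at h8
        exact h8
      have e2 : rep F f n a w ℓ k p = f p := by
        have h8 := (hspec k hk).2.1 hkn
        rw [← hpe] at h8
        exact h8
      rw [e1, e2]
  refine ⟨fun p => rep F f n a w ℓ (topIdx a w ℓ p) p, ?_, ?_⟩
  · -- SatLocal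
    intro p hp1 hp2
    show (rep F f n a w ℓ (topIdx a w ℓ p) p,
      rep F f n a w ℓ (topIdx a w ℓ (p + 1)) (p + 1)) ∉ F
    obtain ⟨ht1, ht2, ht3⟩ := topIdx_mem S hp1 (by omega)
    rcases le_or_gt (p + 1) (epR n a w ℓ (topIdx a w ℓ p)) with h | h
    · have e2 : rep F f n a w ℓ (topIdx a w ℓ (p + 1)) (p + 1) =
          rep F f n a w ℓ (topIdx a w ℓ p) (p + 1) :=
        hagree (p + 1) _ (by omega) (by omega) ht1 (by omega) h
      rw [e2]
      exact (hspec _ ht1).2.2.1 p ht2 h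
    · have hpe : p = epR n a w ℓ (topIdx a w ℓ p) := by omega
      have hRn : epR n a w ℓ (topIdx a w ℓ p) < n := by omega
      have hj₀m : topIdx a w ℓ p + 1 < w / 2 ^ ℓ := by
        by_contra hc
        have he : topIdx a w ℓ p + 1 = w / 2 ^ ℓ := by omega
        have := Setup.epR_last (n := n) (a := a) (w := w) (i := ℓ) he
        omega
      have hsep : epR n a w ℓ (topIdx a w ℓ p) = epL a ℓ (topIdx a w ℓ p + 1) :=
        Setup.epR_eq_epL_succ (by omega)
      have hLR := S.epL_lt_epR (le_refl ℓ) hj₀m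
      have e1 : rep F f n a w ℓ (topIdx a w ℓ p) p =
          rep F f n a w ℓ (topIdx a w ℓ p + 1) p := by
        have := hagree p (topIdx a w ℓ p + 1) hp1 (by omega) hj₀m (by omega) (by omega)
        rw [← this]
      have e2 : rep F f n a w ℓ (topIdx a w ℓ (p + 1)) (p + 1) =
          rep F f n a w ℓ (topIdx a w ℓ p + 1) (p + 1) :=
        hagree (p + 1) (topIdx a w ℓ p + 1) (by omega) (by omega) hj₀m (by omega) (by omega)
      rw [e1, e2]
      exact (hspec _ hj₀m).2.2.1 p (by omega) (by omega)
  · -- cost bound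
    show ((Finset.Icc 1 n).filter
        (fun x => rep F f n a w ℓ (topIdx a w ℓ x) x ≠ f x)).card ≤
      a + (n + 1 - (a + w)) + 2 * ∑ i' ∈ Finset.range ℓ,
        2 ^ i' * ((Tlevel a w n i').filter (MaximalWitness F n f a w ℓ)).card
    have hsub : (Finset.Icc 1 n).filter
          (fun x => rep F f n a w ℓ (topIdx a w ℓ x) x ≠ f x) ⊆
        (Finset.range (w / 2 ^ ℓ)).biUnion (fun k =>
          (Finset.Icc (epL a ℓ k) (epR n a w ℓ k)).filter
            (fun p => rep F f n a w ℓ k p ≠ f p)) := by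
      intro x hx
      rw [Finset.mem_filter, Finset.mem_Icc] at hx
      rw [Finset.mem_biUnion]
      obtain ⟨⟨hx1, hx2⟩, hx3⟩ := hx
      obtain ⟨ht1, ht2, ht3⟩ := topIdx_mem S hx1 hx2
      exact ⟨topIdx a w ℓ x, Finset.mem_range.mpr ht1,
        Finset.mem_filter.mpr ⟨Finset.mem_Icc.mpr ⟨ht2, ht3⟩, hx3⟩⟩
    have h1 := Finset.card_le_card hsub
    have h2 := Finset.card_biUnion_le (s := Finset.range (w / 2 ^ ℓ))
      (t := fun k => (Finset.Icc (epL a ℓ k) (epR n a w ℓ k)).filter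
        (fun p => rep F f n a w ℓ k p ≠ f p))
    have h4 : ∑ k ∈ Finset.range (w / 2 ^ ℓ),
        ((Finset.Icc (epL a ℓ k) (epR n a w ℓ k)).filter
          (fun p => rep F f n a w ℓ k p ≠ f p)).card ≤
        ∑ k ∈ Finset.range (w / 2 ^ ℓ),
          ((if k = 0 then a else 0) +
            (if k + 1 = w / 2 ^ ℓ then n + 1 - (a + w) else 0)
            + 2 * chargeSum F f n a w ℓ ℓ k) :=
      Finset.sum_le_sum (fun k hk => (hspec k (Finset.mem_range.mp hk)).2.2.2)
    have e0 : ∑ k ∈ Finset.range (w / 2 ^ ℓ),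
        ((if k = 0 then a else 0) +
          (if k + 1 = w / 2 ^ ℓ then n + 1 - (a + w) else 0)
          + 2 * chargeSum F f n a w ℓ ℓ k) =
        (∑ k ∈ Finset.range (w / 2 ^ ℓ), (if k = 0 then a else 0)) +
        (∑ k ∈ Finset.range (w / 2 ^ ℓ),
          (if k + 1 = w / 2 ^ ℓ then n + 1 - (a + w) else 0)) +
        2 * ∑ k ∈ Finset.range (w / 2 ^ ℓ), chargeSum F f n a w ℓ ℓ k := by
      rw [Finset.sum_add_distrib, Finset.sum_add_distrib, Finset.mul_sum]
    have e1 : ∑ k ∈ Finset.range (w / 2 ^ ℓ), (if k = 0 then a else 0) = a := by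
      rw [Finset.sum_ite_eq' (Finset.range (w / 2 ^ ℓ)) 0 (fun _ => a)]
      rw [if_pos (Finset.mem_range.mpr (by omega))]
    have e2 : ∑ k ∈ Finset.range (w / 2 ^ ℓ),
        (if k + 1 = w / 2 ^ ℓ then n + 1 - (a + w) else 0) = n + 1 - (a + w) := by
      have hc : ∀ k ∈ Finset.range (w / 2 ^ ℓ),
          (if k + 1 = w / 2 ^ ℓ then n + 1 - (a + w) else 0) =
          (if k = w / 2 ^ ℓ - 1 then n + 1 - (a + w) else 0) := by
        intro k _
        split_ifs with p1 p2 p2 <;> omega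
      rw [Finset.sum_congr rfl hc,
        Finset.sum_ite_eq' (Finset.range (w / 2 ^ ℓ)) (w / 2 ^ ℓ - 1)
          (fun _ => n + 1 - (a + w))]
      rw [if_pos (Finset.mem_range.mpr (by omega))]
    have hCS : ∑ k ∈ Finset.range (w / 2 ^ ℓ), chargeSum F f n a w ℓ ℓ k ≤
        ∑ i' ∈ Finset.range ℓ,
          2 ^ i' * ((Tlevel a w n i').filter (MaximalWitness F n f a w ℓ)).card := by
      unfold chargeSum
      rw [Finset.sum_comm]
      refine Finset.sum_le_sum ?_
      intro i' hi'
      have hi'ℓ : i' < ℓ := Finset.mem_range.mp hi'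
      rw [Finset.sum_comm]
      have hinner : ∀ k' ∈ Finset.range (w / 2 ^ i'),
          (∑ k ∈ Finset.range (w / 2 ^ ℓ),
            if k' / 2 ^ (ℓ - i') = k ∧ MW F f n a w ℓ i' k' then 2 ^ i' else 0) =
          (if MW F f n a w ℓ i' k' then 2 ^ i' else 0) := by
        intro k' hk'
        have hk'' := Finset.mem_range.mp hk'
        have hdiv : k' / 2 ^ (ℓ - i') < w / 2 ^ ℓ := by
          rw [Nat.div_lt_iff_lt_mul (pow_pos two_pos _)]
          rw [← S.m_eq (le_of_lt hi'ℓ)]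
          exact hk''
        have hpt : ∀ k, (if k' / 2 ^ (ℓ - i') = k ∧ MW F f n a w ℓ i' k'
            then 2 ^ i' else (0:ℕ)) =
            (if k = k' / 2 ^ (ℓ - i')
              then (if MW F f n a w ℓ i' k' then 2 ^ i' else 0) else 0) := by
          intro k
          split_ifs with p1 p2 p3 p3 <;> first | rfl | omega | tauto
        rw [Finset.sum_congr rfl (fun k _ => hpt k),
          Finset.sum_ite_eq' (Finset.range (w / 2 ^ ℓ)) (k' / 2 ^ (ℓ - i')) _,
          if_pos (Finset.mem_range.mpr hdiv)]
      rw [Finset.sum_congr rfl hinner, ← Finset.sum_filter]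
      rw [Finset.sum_const, smul_eq_mul]
      rw [mul_comm]
      refine Nat.mul_le_mul_left _ ?_
      refine Finset.card_le_card_of_injOn
        (fun k => (epL a i' k, epR n a w i' k)) ?_ ?_
      · intro k hk
        rw [Finset.mem_coe, Finset.mem_filter, Finset.mem_range] at hk
        rw [Finset.mem_coe, Finset.mem_filter]
        constructor
        · rw [S.mem_Tlevel_iff (le_of_lt hi'ℓ)]
          exact ⟨k, hk.1, rfl⟩
        · exact MW_maximal S (le_of_lt hi'ℓ) hk.1 hk.2
      · intro x hx y hy hxy
        rw [Finset.coe_filter, Set.mem_setOf_eq, Finset.mem_range] at hx hy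
        exact (S.node_inj (le_of_lt hi'ℓ) (le_of_lt hi'ℓ) hx.1 hy.1 hxy).2
    omega

set_option maxHeartbeats 2000000 in
theorem stmt_11 (ε : ℝ) (n : ℕ) (hε : 0 < ε) (hε1 : ε ≤ 1) (hn : 16 ≤ ε * n)
    (F : Set (ℝ × ℝ)) (f : ℕ → ℝ)
    (hfar : ∀ f' : ℕ → ℝ, SatLocal F n f' →
      ε * n ≤ (((Finset.Icc 1 n).filter (fun x => f' x ≠ f x)).card : ℝ))
    (ℓ : ℕ) (hℓ : ℓ = ⌊Real.logb 2 (ε * n / 4)⌋₊)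
    (w : ℕ) (hwdvd : w % 2 ^ ℓ = 0) (hwle : (w : ℝ) ≤ n - ε * n / 4)
    (hwmax : ∀ w' : ℕ, w' % 2 ^ ℓ = 0 → (w' : ℝ) ≤ n - ε * n / 4 → w' ≤ w)
    (a : ℕ) (ha : 1 ≤ a) (ha2 : a ≤ ⌈ε * n / 4⌉₊) :
    ε / 8 ≤ ∑ i ∈ Finset.range (ℓ + 1),
      (((Tlevel a w n i).filter (MaximalWitness F n f a w ℓ)).card : ℝ) /
        ((Tlevel a w n i).card : ℝ) := by
  -- basic numeric facts
  have hnn : (0:ℝ) ≤ n := Nat.cast_nonneg n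
  have hn0 : (0:ℝ) < n := by nlinarith
  have hx0 : (0:ℝ) < ε * n / 4 := by positivity
  have hx4 : (4:ℝ) ≤ ε * n / 4 := by linarith
  have hεn_le_n : ε * n ≤ n := by nlinarith [hnn]
  have hlogb0 : 0 ≤ Real.logb 2 (ε * n / 4) :=
    Real.logb_nonneg (by norm_num) (by linarith)
  have hfl : (ℓ : ℝ) ≤ Real.logb 2 (ε * n / 4) := by
    rw [hℓ]; exact Nat.floor_le hlogb0
  have hfu : Real.logb 2 (ε * n / 4) < ℓ + 1 := by
    rw [hℓ]; exact Nat.lt_floor_add_one _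
  have h2l_le : (2:ℝ) ^ ℓ ≤ ε * n / 4 := by
    have h1 : (2:ℝ) ^ (ℓ:ℝ) ≤ (2:ℝ) ^ Real.logb 2 (ε * n / 4) :=
      (Real.rpow_le_rpow_left_iff (by norm_num : (1:ℝ) < 2)).mpr hfl
    rw [Real.rpow_logb (by norm_num) (by norm_num) hx0] at h1
    rwa [Real.rpow_natCast] at h1
  have h2l_gt : ε * n / 8 < (2:ℝ) ^ ℓ := by
    have h1 : (2:ℝ) ^ Real.logb 2 (ε * n / 4) < (2:ℝ) ^ ((ℓ:ℝ) + 1) :=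
      (Real.rpow_lt_rpow_left_iff (by norm_num : (1:ℝ) < 2)).mpr hfu
    rw [Real.rpow_logb (by norm_num) (by norm_num) hx0] at h1
    have h2 : (2:ℝ) ^ ((ℓ:ℝ) + 1) = 2 * (2:ℝ) ^ ℓ := by
      rw [Real.rpow_add (by norm_num), Real.rpow_one, Real.rpow_natCast]
      ring
    rw [h2] at h1
    linarith
  have h2lpos : (0:ℝ) < (2:ℝ) ^ ℓ := by positivity
  -- lower bound for w
  set W := ⌊(n:ℝ) - ε * n / 4⌋₊ with hW
  have hWr : (W:ℝ) ≤ (n:ℝ) - ε * n / 4 := Nat.floor_le (by nlinarith)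
  have hWl : (n:ℝ) - ε * n / 4 - 1 < W := by
    have := Nat.lt_floor_add_one ((n:ℝ) - ε * n / 4)
    linarith
  have hw'mod : (W / 2 ^ ℓ * 2 ^ ℓ) % 2 ^ ℓ = 0 := Nat.mul_mod_left _ _
  have hw'leW : W / 2 ^ ℓ * 2 ^ ℓ ≤ W := Nat.div_mul_le_self _ _
  have hw'le : ((W / 2 ^ ℓ * 2 ^ ℓ : ℕ) : ℝ) ≤ (n:ℝ) - ε * n / 4 :=
    le_trans (by exact_mod_cast hw'leW) hWr
  have hww' : W / 2 ^ ℓ * 2 ^ ℓ ≤ w := hwmax _ hw'mod hw'le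
  have hmodlt : W % 2 ^ ℓ < 2 ^ ℓ := Nat.mod_lt _ (pow_pos two_pos _)
  have hdm : 2 ^ ℓ * (W / 2 ^ ℓ) + W % 2 ^ ℓ = W := Nat.div_add_mod _ _
  have hcomm : 2 ^ ℓ * (W / 2 ^ ℓ) = W / 2 ^ ℓ * 2 ^ ℓ := Nat.mul_comm _ _
  have hw'geW : W < W / 2 ^ ℓ * 2 ^ ℓ + 2 ^ ℓ := by omega
  have hcast2l : ((2 ^ ℓ : ℕ) : ℝ) = (2:ℝ) ^ ℓ := by push_cast; ring
  have hwlow : (n:ℝ) - ε * n / 2 - 1 < w := by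
    have h1 : (W:ℝ) < ((W / 2 ^ ℓ * 2 ^ ℓ : ℕ) : ℝ) + (2:ℝ) ^ ℓ := by
      rw [← hcast2l]
      exact_mod_cast hw'geW
    have h2 : ((W / 2 ^ ℓ * 2 ^ ℓ : ℕ) : ℝ) ≤ (w:ℝ) := by exact_mod_cast hww'
    linarith
  -- Setup
  have haw : a + w ≤ n := by
    have h1 : (a:ℝ) ≤ (⌈ε * n / 4⌉₊ : ℝ) := by exact_mod_cast ha2
    have h2 : (⌈ε * n / 4⌉₊ : ℝ) < ε * n / 4 + 1 := Nat.ceil_lt_add_one (le_of_lt hx0)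
    have h3 : ((a + w : ℕ) : ℝ) < (n:ℝ) + 1 := by push_cast; linarith
    have h4 : a + w < n + 1 := by exact_mod_cast h3
    omega
  have hm2 : 2 ≤ w / 2 ^ ℓ := by
    have h1 : ((2 * 2 ^ ℓ : ℕ) : ℝ) ≤ (w:ℝ) + 1 := by
      push_cast
      linarith [h2l_le, hwlow, hεn_le_n]
    have h2 : 2 * 2 ^ ℓ ≤ w + 1 := by exact_mod_cast h1
    have h3 : 2 * 2 ^ ℓ ≤ w := by
      rcases Nat.lt_or_ge w (2 * 2 ^ ℓ) with h | h
      · exfalso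
        have he : w + 1 = 2 * 2 ^ ℓ := by omega
        have h5 : ((w:ℝ) + 1) = 2 * (2:ℝ) ^ ℓ := by
          rw [← hcast2l]
          exact_mod_cast congrArg (Nat.cast : ℕ → ℝ) he
        nlinarith
      · exact h
    exact (Nat.le_div_iff_mul_le (pow_pos two_pos _)).mpr h3
  have S : Setup n a w ℓ := ⟨ha, haw, Nat.dvd_of_mod_eq_zero hwdvd, hm2⟩
  have hw0 : 0 < w := by
    rcases Nat.eq_zero_or_pos w with h | h
    · exfalso
      subst h
      simp [Nat.zero_div] at hm2
    · exact h
  have hwpos : (0:ℝ) < w := by exact_mod_cast hw0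
  have hwn : (w:ℝ) ≤ n := by linarith
  -- contradiction setup
  by_contra hcon
  push_neg at hcon
  have hnonneg : ∀ i ∈ Finset.range (ℓ + 1),
      (0:ℝ) ≤ (((Tlevel a w n i).filter (MaximalWitness F n f a w ℓ)).card : ℝ) /
        ((Tlevel a w n i).card : ℝ) := by
    intro i _
    positivity
  -- top level has no witnesses
  have hmcast : ((w / 2 ^ ℓ : ℕ) : ℝ) * (2:ℝ) ^ ℓ = (w:ℝ) := by
    rw [← hcast2l]
    exact_mod_cast S.mul_div (le_refl ℓ)
  have hmpos : (0:ℝ) < ((w / 2 ^ ℓ : ℕ) : ℝ) := by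
    have := S.m2 (le_refl ℓ)
    exact_mod_cast Nat.lt_of_lt_of_le two_pos this
  have hc0 : ((Tlevel a w n ℓ).filter (MaximalWitness F n f a w ℓ)).card = 0 := by
    by_contra hne
    have hge1 : 1 ≤ ((Tlevel a w n ℓ).filter (MaximalWitness F n f a w ℓ)).card := by omega
    have hterm := Finset.single_le_sum hnonneg (Finset.self_mem_range_succ ℓ)
    rw [S.Tlevel_card (le_refl ℓ)] at hterm
    have h1m : (1:ℝ) / ((w / 2 ^ ℓ : ℕ) : ℝ) ≤
        (((Tlevel a w n ℓ).filter (MaximalWitness F n f a w ℓ)).card : ℝ) /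
          ((w / 2 ^ ℓ : ℕ) : ℝ) :=
      (div_le_div_iff_of_pos_right hmpos).mpr (by exact_mod_cast hge1)
    have h1mval : (1:ℝ) / ((w / 2 ^ ℓ : ℕ) : ℝ) = (2:ℝ) ^ ℓ / w := by
      rw [div_eq_div_iff hmpos.ne' hwpos.ne']
      linear_combination -hmcast
    have hlb : ε / 8 < (2:ℝ) ^ ℓ / w := by
      rw [div_lt_div_iff₀ (by norm_num) hwpos]
      nlinarith [h2l_gt, hwn, hε.le]
    linarith [hterm, hcon]
  have htop : ∀ k, k < w / 2 ^ ℓ →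
      ¬ WitnessInterval F n f (epL a ℓ k, epR n a w ℓ k) := by
    intro k hk hWit
    have hMW : MW F f n a w ℓ ℓ k :=
      ⟨hWit, fun i' h1 h2 => absurd (h1.trans_le h2) (lt_irrefl ℓ)⟩
    have hmax := MW_maximal S (le_refl ℓ) hk hMW
    have hmem : (epL a ℓ k, epR n a w ℓ k) ∈
        (Tlevel a w n ℓ).filter (MaximalWitness F n f a w ℓ) :=
      Finset.mem_filter.mpr ⟨(S.mem_Tlevel_iff (le_refl ℓ) _).mpr ⟨k, hk, rfl⟩, hmax⟩
    rw [Finset.card_eq_zero.mp hc0] at hmem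
    exact absurd hmem (Finset.notMem_empty _)
  obtain ⟨f', hsat, hcost⟩ := global_bound S htop
  have hfar' := hfar f' hsat
  have hsubcast : ((n + 1 - (a + w) : ℕ) : ℝ) = (n:ℝ) + 1 - a - w := by
    have h1 : a + w ≤ n + 1 := by omega
    rw [Nat.cast_sub h1]
    push_cast
    ring
  have hcostR : (((Finset.Icc 1 n).filter (fun x => f' x ≠ f x)).card : ℝ) ≤
      (a:ℝ) + ((n:ℝ) + 1 - a - w) +
        2 * ((∑ i' ∈ Finset.range ℓ,
          2 ^ i' * ((Tlevel a w n i').filter (MaximalWitness F n f a w ℓ)).card : ℕ) : ℝ) := by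
    have h1 : (((Finset.Icc 1 n).filter (fun x => f' x ≠ f x)).card : ℝ) ≤
        ((a + (n + 1 - (a + w)) + 2 * ∑ i' ∈ Finset.range ℓ,
          2 ^ i' * ((Tlevel a w n i').filter (MaximalWitness F n f a w ℓ)).card : ℕ) : ℝ) :=
      Nat.cast_le.mpr hcost
    push_cast at h1 ⊢
    rw [hsubcast] at h1
    push_cast at h1
    linarith
  have hSV : ((∑ i' ∈ Finset.range ℓ,
      2 ^ i' * ((Tlevel a w n i').filter (MaximalWitness F n f a w ℓ)).card : ℕ) : ℝ) <
      (n:ℝ) * (ε / 8) := by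
    have hterm2 : ∀ i ∈ Finset.range ℓ,
        ((2:ℝ) ^ i * (((Tlevel a w n i).filter (MaximalWitness F n f a w ℓ)).card : ℝ)) =
        (w:ℝ) * ((((Tlevel a w n i).filter (MaximalWitness F n f a w ℓ)).card : ℝ) /
          ((Tlevel a w n i).card : ℝ)) := by
      intro i hi
      have hiℓ : i ≤ ℓ := le_of_lt (Finset.mem_range.mp hi)
      rw [S.Tlevel_card hiℓ]
      have hmi : ((w / 2 ^ i : ℕ) : ℝ) * (2:ℝ) ^ i = (w:ℝ) := by
        exact_mod_cast congrArg (Nat.cast : ℕ → ℝ) (S.mul_div hiℓ)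
      have hmipos : (0:ℝ) < ((w / 2 ^ i : ℕ) : ℝ) := by
        exact_mod_cast lt_of_lt_of_le two_pos (S.m2 hiℓ)
      field_simp
      linear_combination
        ((((Tlevel a w n i).filter (MaximalWitness F n f a w ℓ)).card : ℝ)) * hmi
    have hcast : ((∑ i' ∈ Finset.range ℓ,
        2 ^ i' * ((Tlevel a w n i').filter (MaximalWitness F n f a w ℓ)).card : ℕ) : ℝ) =
        ∑ i' ∈ Finset.range ℓ,
          ((2:ℝ) ^ i' * (((Tlevel a w n i').filter (MaximalWitness F n f a w ℓ)).card : ℝ)) := by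
      push_cast
      rfl
    rw [hcast, Finset.sum_congr rfl hterm2, ← Finset.mul_sum]
    have h9 : ∑ i' ∈ Finset.range ℓ,
        ((((Tlevel a w n i').filter (MaximalWitness F n f a w ℓ)).card : ℝ) /
          ((Tlevel a w n i').card : ℝ)) ≤
        ∑ i ∈ Finset.range (ℓ + 1),
          ((((Tlevel a w n i).filter (MaximalWitness F n f a w ℓ)).card : ℝ) /
            ((Tlevel a w n i).card : ℝ)) :=
      Finset.sum_le_sum_of_subset_of_nonneg
        (Finset.range_subset_range.mpr (Nat.le_succ ℓ)) (fun i hi _ => hnonneg i hi)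
    calc (w:ℝ) * ∑ i' ∈ Finset.range ℓ,
        ((((Tlevel a w n i').filter (MaximalWitness F n f a w ℓ)).card : ℝ) /
          ((Tlevel a w n i').card : ℝ)) ≤
        (w:ℝ) * ∑ i ∈ Finset.range (ℓ + 1),
          ((((Tlevel a w n i).filter (MaximalWitness F n f a w ℓ)).card : ℝ) /
            ((Tlevel a w n i).card : ℝ)) := by
          exact mul_le_mul_of_nonneg_left h9 (le_of_lt hwpos)
    _ < (w:ℝ) * (ε / 8) := mul_lt_mul_of_pos_left hcon hwpos
    _ ≤ (n:ℝ) * (ε / 8) := by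
          apply mul_le_mul_of_nonneg_right hwn
          positivity
  linarith [hfar', hcostR, hSV, hwlow, hn]
end

section
/- Let ε ∈ (0, 1] and let n be an integer with εn ≥ 16. Let P be a local property of sequences f : [n] → ℝ, and let f : [n] → ℝ. Set ℓ = ⌊log_2(εn/4)⌋, let w be the largest integer divisible by 2^ℓ with w ≤ n − εn/4, let a be any integer with 1 ≤ a ≤ ⌈εn/4⌉, let T = (T_0, …, T_ℓ) be the a-shifted (ℓ, w)-hierarchical partition of [n], and let U be the set of maximal witness intervals of f with respect to T and P. Suppose T_ℓ ∩ U = ∅, so every I ∈ U has a parent P(I) in T. Define S = (∪_{I ∈ U} Int(P(I))) ∪ [1:a] ∪ [a+w : n], where for an interval J = [b:c] the interior Int(J) is J with the elements of {b, c} \ {1, n} removed. Then there exists f' ∈ P such that f'(x) = f(x) for all x ∈ [n] \ S. -/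
open scoped Classical

/-- `J` is the parent of `I`: for some level `i < ℓ`, `I ∈ T_i`, `J ∈ T_{i+1}`,
and `I ⊊ J` as intervals. -/
def IsParent (a w n ℓ : ℕ) (I J : ℕ × ℕ) : Prop :=
  ∃ i : ℕ, i < ℓ ∧ I ∈ Tlevel a w n i ∧ J ∈ Tlevel a w n (i + 1) ∧
    Set.Icc I.1 I.2 ⊂ Set.Icc J.1 J.2

/-- The interior of an interval `J = [b:c]`: `J` with the elements of
`{b, c} \ {1, n}` removed. -/
def interiorSet (n : ℕ) (J : ℕ × ℕ) : Set ℕ :=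
  Set.Icc J.1 J.2 \ (({J.1, J.2} : Set ℕ) \ ({1, n} : Set ℕ))

/-- The set `S = (⋃_{I ∈ U} Int(P(I))) ∪ [1:a] ∪ [a+w:n]`, where `U` is the set of
maximal witness intervals of `f` (w.r.t. the hierarchical partition) and `P(I)` is
the parent of `I`. -/
def badSet (F : Set (ℝ × ℝ)) (n : ℕ) (f : ℕ → ℝ) (a w ℓ : ℕ) : Set ℕ :=
  {x | ∃ I J : ℕ × ℕ, (∃ i ≤ ℓ, I ∈ Tlevel a w n i) ∧
      MaximalWitness F n f a w ℓ I ∧ IsParent a w n ℓ I J ∧ x ∈ interiorSet n J} ∪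
    Set.Icc 1 a ∪ Set.Icc (a + w) n


set_option linter.unusedVariables false
set_option linter.unusedSectionVars false
set_option linter.unusedTactic false

namespace S12

lemma mem_Tlevel_iff {a w n i : ℕ} {I : ℕ × ℕ} :
    I ∈ Tlevel a w n i ↔
      (∃ j, 1 ≤ j ∧ j ≤ w / 2 ^ i - 2 ∧ I = (a + j * 2 ^ i, a + (j + 1) * 2 ^ i)) ∨
        I = (1, a + 2 ^ i) ∨ I = (a + w - 2 ^ i, n) := by
  simp only [Tlevel, Finset.mem_union, Finset.mem_image, Finset.mem_Icc,
    Finset.mem_insert, Finset.mem_singleton]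
  constructor
  · rintro (⟨j, ⟨hj1, hj2⟩, rfl⟩ | h | h)
    · exact Or.inl ⟨j, hj1, hj2, rfl⟩
    · exact Or.inr (Or.inl h)
    · exact Or.inr (Or.inr h)
  · rintro (⟨j, hj1, hj2, rfl⟩ | h | h)
    · exact Or.inl ⟨j, ⟨hj1, hj2⟩, rfl⟩
    · exact Or.inr (Or.inl h)
    · exact Or.inr (Or.inr h)

lemma tcases {a w n i : ℕ} {I : ℕ × ℕ} (hI : I ∈ Tlevel a w n i) :
    (∃ j, 1 ≤ j ∧ j + 2 ≤ w / 2 ^ i ∧ I = (a + j * 2 ^ i, a + (j + 1) * 2 ^ i)) ∨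
      I = (1, a + 2 ^ i) ∨ I = (a + w - 2 ^ i, n) := by
  rcases mem_Tlevel_iff.1 hI with ⟨j, h1, h2, h3⟩ | h | h
  · exact Or.inl ⟨j, h1, by omega, h3⟩
  · exact Or.inr (Or.inl h)
  · exact Or.inr (Or.inr h)

lemma qfacts {w i : ℕ} (hd : 2 ^ i ∣ w) (hw2 : 2 * 2 ^ i ≤ w) :
    ∃ q, w / 2 ^ i = q ∧ w = q * 2 ^ i ∧ 2 ≤ q := by
  refine ⟨w / 2 ^ i, rfl, (Nat.div_mul_cancel hd).symm, ?_⟩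
  rw [Nat.le_div_iff_mul_le (pow_pos (by norm_num) i)]
  omega

lemma nd {a w n i : ℕ} (ha : 1 ≤ a) (hawn : a + w ≤ n) (hd : 2 ^ i ∣ w)
    (hw2 : 2 * 2 ^ i ≤ w) {I : ℕ × ℕ} (hI : I ∈ Tlevel a w n i) :
    1 ≤ I.1 ∧ I.1 < I.2 ∧ I.2 ≤ n := by
  obtain ⟨q, hqd, hq, hq2⟩ := qfacts hd hw2
  have he : 1 ≤ 2 ^ i := Nat.one_le_two_pow
  rcases tcases hI with ⟨j, hj1, hj2, rfl⟩ | rfl | rfl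
  · rw [hqd] at hj2
    have h1 : (j + 2) * 2 ^ i ≤ q * 2 ^ i := Nat.mul_le_mul_right _ hj2
    have h2 : (j + 2) * 2 ^ i = j * 2 ^ i + 2 * 2 ^ i := by ring
    have h3 : (j + 1) * 2 ^ i = j * 2 ^ i + 2 ^ i := by ring
    simp only
    omega
  · simp only
    omega
  · simp only
    omega


/-- Grid points at level `i`. -/
def Grid (a w n i x : ℕ) : Prop :=
  x = 1 ∨ x = n ∨ ∃ k, 1 ≤ k ∧ k + 1 ≤ w / 2 ^ i ∧ x = a + k * 2 ^ i

lemma endpoints_grid {a w n i : ℕ} (hd : 2 ^ i ∣ w) (hw2 : 2 * 2 ^ i ≤ w)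
    {I : ℕ × ℕ} (hI : I ∈ Tlevel a w n i) :
    Grid a w n i I.1 ∧ Grid a w n i I.2 := by
  obtain ⟨q, hqd, hq, hq2⟩ := qfacts hd hw2
  rcases tcases hI with ⟨j, hj1, hj2, rfl⟩ | rfl | rfl
  · exact ⟨Or.inr (Or.inr ⟨j, hj1, by omega, rfl⟩),
      Or.inr (Or.inr ⟨j + 1, by omega, by omega, rfl⟩)⟩
  · refine ⟨Or.inl rfl, Or.inr (Or.inr ⟨1, le_refl _, by omega, by simp⟩)⟩
  · refine ⟨Or.inr (Or.inr ⟨q - 1, by omega, by omega, ?_⟩), Or.inr (Or.inl rfl)⟩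
    simp only
    have h1 : (q - 1) * 2 ^ i + 2 ^ i = q * 2 ^ i := by
      have : q - 1 + 1 = q := by omega
      calc (q - 1) * 2 ^ i + 2 ^ i = (q - 1 + 1) * 2 ^ i := by ring
      _ = q * 2 ^ i := by rw [this]
    have he : 1 ≤ 2 ^ i := Nat.one_le_two_pow
    omega

lemma grid_mono {a w n i m x : ℕ} (him : i ≤ m) (hdm : 2 ^ m ∣ w)
    (hw2 : 2 * 2 ^ m ≤ w) (hx : Grid a w n m x) : Grid a w n i x := by
  rcases hx with h | h | ⟨k, hk1, hk2, rfl⟩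
  · exact Or.inl h
  · exact Or.inr (Or.inl h)
  · obtain ⟨q, hqd, hq, hq2⟩ := qfacts hdm hw2
    rw [hqd] at hk2
    have hpow : 2 ^ m = 2 ^ (m - i) * 2 ^ i := by
      rw [← pow_add]
      congr 1
      omega
    have hdi : 2 ^ i ∣ w := dvd_trans (pow_dvd_pow 2 him) hdm
    have hqi : w / 2 ^ i = q * 2 ^ (m - i) := by
      rw [Nat.div_eq_iff_eq_mul_left (pow_pos (by norm_num) i) hdi]
      rw [hq, hpow]; ring
    refine Or.inr (Or.inr ⟨k * 2 ^ (m - i), ?_, ?_, ?_⟩)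
    · have h1 : 1 ≤ 2 ^ (m - i) := Nat.one_le_two_pow
      calc 1 = 1 * 1 := by ring
      _ ≤ k * 2 ^ (m - i) := Nat.mul_le_mul hk1 h1
    · rw [hqi]
      have h1 : 1 ≤ 2 ^ (m - i) := Nat.one_le_two_pow
      have h2 : (k + 1) * 2 ^ (m - i) ≤ q * 2 ^ (m - i) := Nat.mul_le_mul_right _ hk2
      have h3 : (k + 1) * 2 ^ (m - i) = k * 2 ^ (m - i) + 2 ^ (m - i) := by ring
      omega
    · rw [hpow, ← mul_assoc]

lemma no_inner {a w n i : ℕ} (ha : 1 ≤ a) (hawn : a + w ≤ n) (hd : 2 ^ i ∣ w)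
    (hw2 : 2 * 2 ^ i ≤ w) {I : ℕ × ℕ} (hI : I ∈ Tlevel a w n i) {g : ℕ}
    (hg : Grid a w n i g) : ¬(I.1 < g ∧ g < I.2) := by
  obtain ⟨q, hqd, hq, hq2⟩ := qfacts hd hw2
  have he : 1 ≤ 2 ^ i := Nat.one_le_two_pow
  rintro ⟨hg1, hg2⟩
  rcases tcases hI with ⟨j, hj1, hj2, rfl⟩ | rfl | rfl <;>
    simp only at hg1 hg2 <;>
    rcases hg with rfl | rfl | ⟨k, hk1, hk2, rfl⟩
  · omega
  · -- middle, g = n : need I.2 ≤ n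
    rw [hqd] at hj2
    have h1 : (j + 2) * 2 ^ i ≤ q * 2 ^ i := Nat.mul_le_mul_right _ hj2
    have h2 : (j + 2) * 2 ^ i = j * 2 ^ i + 2 * 2 ^ i := by ring
    have h3 : (j + 1) * 2 ^ i = j * 2 ^ i + 2 ^ i := by ring
    omega
  · -- middle, g = a + k * 2^i : j < k < j+1 impossible
    have h1 : j * 2 ^ i < k * 2 ^ i := by omega
    have h2 : k * 2 ^ i < (j + 1) * 2 ^ i := by omega
    have h3 : j < k := lt_of_mul_lt_mul_right h1 (Nat.zero_le _)
    have h4 : k < j + 1 := lt_of_mul_lt_mul_right h2 (Nat.zero_le _)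
    omega
  · omega
  · -- left edge, g = n : a + 2^i ≤ n
    omega
  · -- left edge, g = a + k*2^i with k ≥ 1 : g ≥ a + 2^i
    have h1 : 1 * 2 ^ i ≤ k * 2 ^ i := Nat.mul_le_mul_right _ hk1
    omega
  · omega
  · omega
  · -- right edge, g = a + k * 2^i < ... k+1 ≤ q so k*2^i ≤ w - 2^i
    rw [hqd] at hk2
    have h1 : (k + 1) * 2 ^ i ≤ q * 2 ^ i := Nat.mul_le_mul_right _ hk2
    have h2 : (k + 1) * 2 ^ i = k * 2 ^ i + 2 ^ i := by ring
    omega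

lemma laminar_le {a w n i m : ℕ} (ha : 1 ≤ a) (hawn : a + w ≤ n) (him : i ≤ m)
    (hdi : 2 ^ i ∣ w) (hw2i : 2 * 2 ^ i ≤ w) (hdm : 2 ^ m ∣ w) (hw2m : 2 * 2 ^ m ≤ w)
    {I J : ℕ × ℕ} (hI : I ∈ Tlevel a w n i) (hJ : J ∈ Tlevel a w n m) :
    (J.1 ≤ I.1 ∧ I.2 ≤ J.2) ∨ I.2 ≤ J.1 ∨ J.2 ≤ I.1 := by
  have hJg := endpoints_grid hdm hw2m hJ
  have hg1 : Grid a w n i J.1 := grid_mono him hdm hw2m hJg.1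
  have hg2 : Grid a w n i J.2 := grid_mono him hdm hw2m hJg.2
  have h1 := no_inner ha hawn hdi hw2i hI hg1
  have h2 := no_inner ha hawn hdi hw2i hI hg2
  have hndI := nd ha hawn hdi hw2i hI
  have hndJ := nd ha hawn hdm hw2m hJ
  omega

/-- symmetric laminarity for two members at arbitrary levels -/
lemma laminar {a w n i m : ℕ} (ha : 1 ≤ a) (hawn : a + w ≤ n)
    (hdi : 2 ^ i ∣ w) (hw2i : 2 * 2 ^ i ≤ w) (hdm : 2 ^ m ∣ w) (hw2m : 2 * 2 ^ m ≤ w)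
    {I J : ℕ × ℕ} (hI : I ∈ Tlevel a w n i) (hJ : J ∈ Tlevel a w n m) :
    (J.1 ≤ I.1 ∧ I.2 ≤ J.2) ∨ (I.1 ≤ J.1 ∧ J.2 ≤ I.2) ∨ I.2 ≤ J.1 ∨ J.2 ≤ I.1 := by
  rcases le_total i m with h | h
  · rcases laminar_le ha hawn h hdi hw2i hdm hw2m hI hJ with h' | h' | h'
    · exact Or.inl h'
    · exact Or.inr (Or.inr (Or.inl h'))
    · exact Or.inr (Or.inr (Or.inr h'))
  · rcases laminar_le ha hawn h hdm hw2m hdi hw2i hJ hI with h' | h' | h'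
    · exact Or.inr (Or.inl h')
    · exact Or.inr (Or.inr (Or.inr h'))
    · exact Or.inr (Or.inr (Or.inl h'))

/-- every level-`i` member (i < ℓ) is strictly inside some level-`i+1` member -/
lemma parent_step {a w n i : ℕ} (ha : 1 ≤ a) (hawn : a + w ≤ n)
    (hdi1 : 2 ^ (i + 1) ∣ w) (hw2i1 : 2 * 2 ^ (i + 1) ≤ w)
    {I : ℕ × ℕ} (hI : I ∈ Tlevel a w n i) :
    ∃ J ∈ Tlevel a w n (i + 1), J.1 ≤ I.1 ∧ I.2 ≤ J.2 ∧ (J.1 < I.1 ∨ I.2 < J.2) := by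
  obtain ⟨q, hqd, hq, hq2⟩ := qfacts hdi1 hw2i1
  have he : 1 ≤ 2 ^ i := Nat.one_le_two_pow
  have hpow : 2 ^ (i + 1) = 2 * 2 ^ i := by rw [pow_succ]; ring
  have hdi : 2 ^ i ∣ w := dvd_trans (pow_dvd_pow 2 (Nat.le_succ i)) hdi1
  have hqi : w / 2 ^ i = 2 * q := by
    rw [Nat.div_eq_iff_eq_mul_left (pow_pos (by norm_num) i) hdi]
    rw [hq, hpow]; ring
  rcases tcases hI with ⟨j, hj1, hj2, rfl⟩ | rfl | rfl
  · rw [hqi] at hj2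
    -- j ∈ [1, 2q-2]
    rcases Nat.lt_or_ge j 2 with hj | hj
    · -- j = 1 : parent is left edge
      have hj' : j = 1 := by omega
      subst hj'
      refine ⟨(1, a + 2 ^ (i + 1)), mem_Tlevel_iff.2 (Or.inr (Or.inl rfl)), ?_, ?_, ?_⟩
      · simp only; omega
      · simp only
        have h1 : (1 + 1) * 2 ^ i = 2 * 2 ^ i := by ring
        omega
      · simp only; omega
    · rcases Nat.lt_or_ge j (2 * q - 2) with hj' | hj'
      · -- middle parent, p = j / 2 ∈ [1, q - 2]
        obtain ⟨r, hr, hjr⟩ : ∃ r, r < 2 ∧ j = 2 * (j / 2) + r :=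
          ⟨j % 2, Nat.mod_lt _ (by norm_num), by omega⟩
        set p := j / 2 with hp
        have hp1 : 1 ≤ p := by omega
        have hp2 : p ≤ q - 2 := by omega
        refine ⟨(a + p * 2 ^ (i + 1), a + (p + 1) * 2 ^ (i + 1)),
          mem_Tlevel_iff.2 (Or.inl ⟨p, hp1, by omega, rfl⟩), ?_, ?_, ?_⟩
        · simp only
          have h1 : p * 2 ^ (i + 1) = 2 * p * 2 ^ i := by rw [hpow]; ring
          have h2 : (2 * p) * 2 ^ i ≤ j * 2 ^ i := Nat.mul_le_mul_right _ (by omega)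
          omega
        · simp only
          have h1 : (p + 1) * 2 ^ (i + 1) = (2 * p + 2) * 2 ^ i := by rw [hpow]; ring
          have h2 : (j + 1) * 2 ^ i ≤ (2 * p + 2) * 2 ^ i := Nat.mul_le_mul_right _ (by omega)
          omega
        · simp only
          rcases Nat.lt_or_ge r 1 with hr0 | hr0
          · -- j = 2p : right strict
            right
            have h1 : (p + 1) * 2 ^ (i + 1) = (2 * p + 2) * 2 ^ i := by rw [hpow]; ring
            have h2 : (j + 1) * 2 ^ i < (2 * p + 2) * 2 ^ i := by
              have : (j + 1) + 1 ≤ 2 * p + 2 := by omega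
              have h3 : ((j+1)+1) * 2 ^ i ≤ (2*p+2) * 2 ^ i := Nat.mul_le_mul_right _ this
              have h4 : ((j+1)+1) * 2 ^ i = (j+1) * 2 ^ i + 2 ^ i := by ring
              omega
            omega
          · -- j = 2p + 1 : left strict
            left
            have h1 : p * 2 ^ (i + 1) = 2 * p * 2 ^ i := by rw [hpow]; ring
            have h2 : (2 * p) * 2 ^ i < j * 2 ^ i := by
              have : 2 * p + 1 ≤ j := by omega
              have h3 : (2*p+1) * 2 ^ i ≤ j * 2 ^ i := Nat.mul_le_mul_right _ this
              have h4 : (2*p+1) * 2 ^ i = 2*p * 2 ^ i + 2 ^ i := by ring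
              omega
            omega
      · -- j = 2q - 2 : parent is right edge
        have hj'' : j = 2 * q - 2 := by omega
        subst hj''
        refine ⟨(a + w - 2 ^ (i + 1), n), mem_Tlevel_iff.2 (Or.inr (Or.inr rfl)), ?_, ?_, ?_⟩
        · simp only
          have h1 : (2 * q - 2) * 2 ^ i + 2 * 2 ^ i = q * 2 ^ (i + 1) := by
            have : (2 * q - 2) + 2 = 2 * q := by omega
            calc (2 * q - 2) * 2 ^ i + 2 * 2 ^ i = ((2 * q - 2) + 2) * 2 ^ i := by ring
            _ = (2 * q) * 2 ^ i := by rw [this]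
            _ = q * 2 ^ (i + 1) := by rw [hpow]; ring
          have h2 : q * 2 ^ (i + 1) = w := by rw [hq]
          have h3 : 2 ^ (i + 1) = 2 * 2 ^ i := hpow
          omega
        · simp only
          have h1 : (2 * q - 2 + 1) * 2 ^ i + 2 ^ i = q * 2 ^ (i + 1) := by
            have : (2 * q - 2 + 1) + 1 = 2 * q := by omega
            calc (2 * q - 2 + 1) * 2 ^ i + 2 ^ i = ((2 * q - 2 + 1) + 1) * 2 ^ i := by ring
            _ = (2 * q) * 2 ^ i := by rw [this]
            _ = q * 2 ^ (i + 1) := by rw [hpow]; ring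
          have h2 : q * 2 ^ (i + 1) = w := by rw [hq]
          omega
        · simp only
          right
          have h1 : (2 * q - 2 + 1) * 2 ^ i + 2 ^ i = q * 2 ^ (i + 1) := by
            have : (2 * q - 2 + 1) + 1 = 2 * q := by omega
            calc (2 * q - 2 + 1) * 2 ^ i + 2 ^ i = ((2 * q - 2 + 1) + 1) * 2 ^ i := by ring
            _ = (2 * q) * 2 ^ i := by rw [this]
            _ = q * 2 ^ (i + 1) := by rw [hpow]; ring
          have h2 : q * 2 ^ (i + 1) = w := by rw [hq]
          omega
  · -- left edge
    refine ⟨(1, a + 2 ^ (i + 1)), mem_Tlevel_iff.2 (Or.inr (Or.inl rfl)), ?_, ?_, ?_⟩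
    · simp only; omega
    · simp only
      have : 2 ^ i ≤ 2 ^ (i + 1) := by rw [hpow]; omega
      omega
    · simp only
      right
      have : 2 ^ i < 2 ^ (i + 1) := by rw [hpow]; omega
      omega
  · -- right edge
    refine ⟨(a + w - 2 ^ (i + 1), n), mem_Tlevel_iff.2 (Or.inr (Or.inr rfl)), ?_, ?_, ?_⟩
    · simp only
      have : 2 ^ i ≤ 2 ^ (i + 1) := by rw [hpow]; omega
      omega
    · simp only; omega
    · simp only
      left
      have h1 : 2 ^ i < 2 ^ (i + 1) := by rw [hpow]; omega
      have h2 : 2 ^ (i + 1) ≤ w := by omega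
      omega

/-- coverage: every consecutive pair inside `[1,n]` lies in some level-`m` member -/
lemma cover {a w n m : ℕ} (ha : 1 ≤ a) (hawn : a + w ≤ n) (hd : 2 ^ m ∣ w)
    (hw2 : 2 * 2 ^ m ≤ w) {x : ℕ} (hx1 : 1 ≤ x) (hx2 : x + 1 ≤ n) :
    ∃ K ∈ Tlevel a w n m, K.1 ≤ x ∧ x + 1 ≤ K.2 := by
  obtain ⟨q, hqd, hq, hq2⟩ := qfacts hd hw2
  have he : 1 ≤ 2 ^ m := Nat.one_le_two_pow
  rcases Nat.lt_or_ge x (a + 2 ^ m) with h1 | h1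
  · exact ⟨(1, a + 2 ^ m), mem_Tlevel_iff.2 (Or.inr (Or.inl rfl)), hx1, by simp only; omega⟩
  rcases Nat.lt_or_ge x (a + w - 2 ^ m) with h2 | h2
  · -- middle
    set j := (x - a) / 2 ^ m with hj
    obtain ⟨r, hr, hxr⟩ : ∃ r, r < 2 ^ m ∧ x - a = 2 ^ m * j + r :=
      ⟨(x - a) % 2 ^ m, Nat.mod_lt _ (by omega),
        by rw [hj]; exact (Nat.div_add_mod (x - a) (2 ^ m)).symm⟩
    have hqe : 2 ^ m * q = w := by rw [hq]; ring
    have hax : a ≤ x := by omega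
    have hj1 : 1 ≤ j := by
      rcases Nat.eq_zero_or_pos j with h0 | h0
      · exfalso
        have : 2 ^ m * j = 0 := by rw [h0]; ring
        omega
      · exact h0
    have hjq : j + 2 ≤ q := by
      have hA : 2 ^ m * j + 2 ^ m ≤ w - 1 := by omega
      have hB : 2 ^ m * (j + 1) < 2 ^ m * q := by
        have h3 : 2 ^ m * (j + 1) = 2 ^ m * j + 2 ^ m := by ring
        omega
      have := lt_of_mul_lt_mul_left hB (Nat.zero_le (2 ^ m))
      omega
    refine ⟨(a + j * 2 ^ m, a + (j + 1) * 2 ^ m),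
      mem_Tlevel_iff.2 (Or.inl ⟨j, hj1, by omega, rfl⟩), ?_, ?_⟩
    · simp only
      have : j * 2 ^ m = 2 ^ m * j := by ring
      omega
    · simp only
      have : (j + 1) * 2 ^ m = 2 ^ m * j + 2 ^ m := by ring
      omega
  · -- right edge
    exact ⟨(a + w - 2 ^ m, n), mem_Tlevel_iff.2 (Or.inr (Or.inr rfl)), h2, hx2⟩

lemma icc_ssub {b c b' c' : ℕ} (hbc : b ≤ c) (h1 : b' ≤ b) (h2 : c ≤ c')
    (h : b' < b ∨ c < c') : Set.Icc b c ⊂ Set.Icc b' c' := by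
  rw [Set.ssubset_iff_subset_ne]
  refine ⟨Set.Icc_subset_Icc h1 h2, fun heq => ?_⟩
  have hb' : b' ∈ Set.Icc b c := by rw [heq]; exact Set.mem_Icc.2 ⟨le_refl _, by omega⟩
  have hc' : c' ∈ Set.Icc b c := by rw [heq]; exact Set.mem_Icc.2 ⟨by omega, le_refl _⟩
  rw [Set.mem_Icc] at hb' hc'
  omega

lemma icc_ssub_elim {b c b' c' : ℕ} (hbc : b ≤ c)
    (h : Set.Icc b c ⊂ Set.Icc b' c') : b' ≤ b ∧ c ≤ c' ∧ (b' < b ∨ c < c') := by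
  have hsub := h.subset
  rw [Set.Icc_subset_Icc_iff hbc] at hsub
  by_cases heq : b' = b ∧ c' = c
  · exfalso
    exact h.ne (by rw [heq.1, heq.2])
  · omega

/-- main chain lemma -/
lemma chain {a w n ℓ : ℕ} {F : Set (ℝ × ℝ)} {f : ℕ → ℝ}
    (ha : 1 ≤ a) (hawn : a + w ≤ n)
    (hdvd : ∀ i ≤ ℓ, 2 ^ i ∣ w) (hw2 : ∀ i ≤ ℓ, 2 * 2 ^ i ≤ w)
    (hnomax : ∀ I ∈ Tlevel a w n ℓ, ¬ MaximalWitness F n f a w ℓ I) :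
    ∀ k m : ℕ, m ≤ ℓ → ℓ - m ≤ k → ∀ W ∈ Tlevel a w n m, WitnessInterval F n f W →
      ∃ I J : ℕ × ℕ, (∃ i ≤ ℓ, I ∈ Tlevel a w n i) ∧ MaximalWitness F n f a w ℓ I ∧
        IsParent a w n ℓ I J ∧ I.1 ≤ W.1 ∧ W.2 ≤ I.2 := by
  intro k
  induction k with
  | zero =>
    intro m hm hk W hW hwit
    -- m = ℓ here (or general argument showing no bigger witness)
    by_cases hQ : ∃ j ≤ ℓ, ∃ J' ∈ Tlevel a w n j,
        (Set.Icc W.1 W.2 ⊂ Set.Icc J'.1 J'.2) ∧ WitnessInterval F n f J'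
    · exfalso
      obtain ⟨j, hjl, J', hJ', hss, hwitJ'⟩ := hQ
      -- show m < j, but m = ℓ ≥ j, contradiction
      have hndW := nd ha hawn (hdvd m hm) (hw2 m hm) hW
      have hmj : m < j := by
        by_contra hmj
        push_neg at hmj
        obtain ⟨hb1, hb2, hb3⟩ := icc_ssub_elim (le_of_lt hndW.2.1) hss
        have hWg := endpoints_grid (hdvd m hm) (hw2 m hm) hW
        have hg1 : Grid a w n j W.1 := grid_mono hmj (hdvd m hm) (hw2 m hm) hWg.1
        have hg2 : Grid a w n j W.2 := grid_mono hmj (hdvd m hm) (hw2 m hm) hWg.2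
        have hni1 := no_inner ha hawn (hdvd j hjl) (hw2 j hjl) hJ' hg1
        have hni2 := no_inner ha hawn (hdvd j hjl) (hw2 j hjl) hJ' hg2
        have hndJ' := nd ha hawn (hdvd j hjl) (hw2 j hjl) hJ'
        omega
      omega
    · -- W is a maximal witness
      push_neg at hQ
      have hmw : MaximalWitness F n f a w ℓ W := by
        refine ⟨hwit, fun J' hanc hwitJ' => ?_⟩
        obtain ⟨i', j, hij, hjl, hWi', hJ'j, hss⟩ := hanc
        exact hQ j hjl J' hJ'j hss hwitJ'
      have hmℓ : m = ℓ := by omega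
      subst hmℓ
      exact absurd hmw (hnomax W hW)
  | succ k ih =>
    intro m hm hk W hW hwit
    by_cases hQ : ∃ j ≤ ℓ, ∃ J' ∈ Tlevel a w n j,
        (Set.Icc W.1 W.2 ⊂ Set.Icc J'.1 J'.2) ∧ WitnessInterval F n f J'
    · obtain ⟨j, hjl, J', hJ', hss, hwitJ'⟩ := hQ
      have hndW := nd ha hawn (hdvd m hm) (hw2 m hm) hW
      have hmj : m < j := by
        by_contra hmj
        push_neg at hmj
        obtain ⟨hb1, hb2, hb3⟩ := icc_ssub_elim (le_of_lt hndW.2.1) hss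
        have hWg := endpoints_grid (hdvd m hm) (hw2 m hm) hW
        have hg1 : Grid a w n j W.1 := grid_mono hmj (hdvd m hm) (hw2 m hm) hWg.1
        have hg2 : Grid a w n j W.2 := grid_mono hmj (hdvd m hm) (hw2 m hm) hWg.2
        have hni1 := no_inner ha hawn (hdvd j hjl) (hw2 j hjl) hJ' hg1
        have hni2 := no_inner ha hawn (hdvd j hjl) (hw2 j hjl) hJ' hg2
        have hndJ' := nd ha hawn (hdvd j hjl) (hw2 j hjl) hJ'
        omega
      obtain ⟨I, J, hfam, hmw, hpar, hi1, hi2⟩ := ih j hjl (by omega) J' hJ' hwitJ'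
      obtain ⟨hb1, hb2, hb3⟩ := icc_ssub_elim (le_of_lt (nd ha hawn (hdvd m hm)
        (hw2 m hm) hW).2.1) hss
      exact ⟨I, J, hfam, hmw, hpar, by omega, by omega⟩
    · push_neg at hQ
      have hmw : MaximalWitness F n f a w ℓ W := by
        refine ⟨hwit, fun J' hanc hwitJ' => ?_⟩
        obtain ⟨i', j, hij, hjl, hWi', hJ'j, hss⟩ := hanc
        exact hQ j hjl J' hJ'j hss hwitJ'
      have hmℓ : m < ℓ ∨ m = ℓ := by omega
      rcases hmℓ with hmℓ | hmℓ
      · obtain ⟨J, hJ, hp1, hp2, hp3⟩ := parent_step ha hawn (hdvd (m + 1) (by omega))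
          (hw2 (m + 1) (by omega)) hW
        have hndW := nd ha hawn (hdvd m hm) (hw2 m hm) hW
        refine ⟨W, J, ⟨m, hm, hW⟩, hmw, ⟨m, hmℓ, hW, hJ, ?_⟩, le_refl _, le_refl _⟩
        exact icc_ssub (le_of_lt hndW.2.1) hp1 hp2 hp3
      · subst hmℓ
        exact absurd hmw (hnomax W hW)
  -- done

/-- candidate repair intervals -/
def Eset (F : Set (ℝ × ℝ)) (n : ℕ) (f : ℕ → ℝ) (a w ℓ : ℕ) : Set (ℕ × ℕ) :=
  {J | ∃ I : ℕ × ℕ, (∃ i ≤ ℓ, I ∈ Tlevel a w n i) ∧ MaximalWitness F n f a w ℓ I ∧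
    IsParent a w n ℓ I J} ∪ {(1, a + 1), (a + w - 1, n)}

/-- maximal repair intervals -/
def Sset (F : Set (ℝ × ℝ)) (n : ℕ) (f : ℕ → ℝ) (a w ℓ : ℕ) : Set (ℕ × ℕ) :=
  {S ∈ Eset F n f a w ℓ | ∀ K ∈ Eset F n f a w ℓ,
    (K.1 ≤ S.1 ∧ S.2 ≤ K.2) → (S.1 ≤ K.1 ∧ K.2 ≤ S.2)}

noncomputable def fill (F : Set (ℝ × ℝ)) (n : ℕ) (f : ℕ → ℝ) (S : ℕ × ℕ) : ℕ → ℝ :=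
  if h : ∃ g : ℕ → ℝ, (1 < S.1 → g S.1 = f S.1) ∧ (S.2 < n → g S.2 = f S.2) ∧
      ∀ i : ℕ, S.1 ≤ i → i + 1 ≤ S.2 → (g i, g (i + 1)) ∉ F
  then h.choose else f

lemma fill_spec {F : Set (ℝ × ℝ)} {n : ℕ} {f : ℕ → ℝ} {S : ℕ × ℕ}
    (hS : ¬ WitnessInterval F n f S) :
    (1 < S.1 → fill F n f S S.1 = f S.1) ∧ (S.2 < n → fill F n f S S.2 = f S.2) ∧
      ∀ i : ℕ, S.1 ≤ i → i + 1 ≤ S.2 → (fill F n f S i, fill F n f S (i + 1)) ∉ F := by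
  rw [WitnessInterval] at hS
  push_neg at hS
  obtain ⟨g, hg1, hg2, hg3⟩ := hS
  have hex : ∃ g : ℕ → ℝ, (1 < S.1 → g S.1 = f S.1) ∧ (S.2 < n → g S.2 = f S.2) ∧
      ∀ i : ℕ, S.1 ≤ i → i + 1 ≤ S.2 → (g i, g (i + 1)) ∉ F :=
    ⟨g, hg1, hg2, fun i h1 h2 => hg3 i h1 h2⟩
  rw [fill, dif_pos hex]
  exact hex.choose_spec

noncomputable def patch (F : Set (ℝ × ℝ)) (n : ℕ) (f : ℕ → ℝ) (SS : Set (ℕ × ℕ)) :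
    ℕ → ℝ :=
  fun x => if h : ∃ S ∈ SS, S.1 ≤ x ∧ x ≤ S.2 then fill F n f h.choose x else f x

section Main
variable {F : Set (ℝ × ℝ)} {n : ℕ} {f : ℕ → ℝ} {a w ℓ : ℕ}
variable (ha : 1 ≤ a) (hawn : a + w ≤ n)
  (hdvd : ∀ i ≤ ℓ, 2 ^ i ∣ w) (hw2 : ∀ i ≤ ℓ, 2 * 2 ^ i ≤ w)
  (hnomax : ∀ I ∈ Tlevel a w n ℓ, ¬ MaximalWitness F n f a w ℓ I)

include ha hawn hdvd hw2

lemma L0_mem : (1, a + 1) ∈ Tlevel a w n 0 :=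
  mem_Tlevel_iff.2 (Or.inr (Or.inl (by norm_num)))

lemma R0_mem : (a + w - 1, n) ∈ Tlevel a w n 0 :=
  mem_Tlevel_iff.2 (Or.inr (Or.inr (by norm_num)))

lemma Emem {S : ℕ × ℕ} (hS : S ∈ Eset F n f a w ℓ) :
    ∃ m ≤ ℓ, S ∈ Tlevel a w n m := by
  rcases hS with ⟨I, _, _, i, hiℓ, _, hJ, _⟩ | hS
  · exact ⟨i + 1, by omega, hJ⟩
  · rcases hS with h | h
    · exact ⟨0, Nat.zero_le _, h ▸ L0_mem ha hawn hdvd hw2⟩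
    · exact ⟨0, Nat.zero_le _, h ▸ R0_mem ha hawn hdvd hw2⟩

lemma End {S : ℕ × ℕ} (hS : S ∈ Eset F n f a w ℓ) :
    1 ≤ S.1 ∧ S.1 < S.2 ∧ S.2 ≤ n := by
  obtain ⟨m, hm, hmem⟩ := Emem ha hawn hdvd hw2 hS
  exact nd ha hawn (hdvd m hm) (hw2 m hm) hmem

lemma Efin : (Eset F n f a w ℓ).Finite := by
  apply Set.Finite.subset ((Set.finite_Iic ℓ).biUnion
    (fun m _ => (Tlevel a w n m).finite_toSet))
  intro S hS
  obtain ⟨m, hm, hmem⟩ := Emem ha hawn hdvd hw2 hS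
  exact Set.mem_biUnion hm hmem

lemma Emax {J : ℕ × ℕ} (hJ : J ∈ Eset F n f a w ℓ) :
    ∃ S ∈ Sset F n f a w ℓ, S.1 ≤ J.1 ∧ J.2 ≤ S.2 := by
  set sub := {K ∈ Eset F n f a w ℓ | K.1 ≤ J.1 ∧ J.2 ≤ K.2} with hsub
  have hfin : sub.Finite := (Efin ha hawn hdvd hw2).subset (fun K hK => hK.1)
  have hne : sub.Nonempty := ⟨J, hJ, le_refl _, le_refl _⟩
  obtain ⟨S, hSsub, hSmax⟩ := Set.Finite.exists_maximalFor (fun K => K.2 - K.1) sub hfin hne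
  refine ⟨S, ⟨hSsub.1, fun K hK hKS => ?_⟩, hSsub.2.1, hSsub.2.2⟩
  have hKsub : K ∈ sub := ⟨hK, le_trans hKS.1 hSsub.2.1, le_trans hSsub.2.2 hKS.2⟩
  have hndS := End ha hawn hdvd hw2 hSsub.1
  have hndK := End ha hawn hdvd hw2 hK
  have hle : S.2 - S.1 ≤ K.2 - K.1 := by omega
  have heq : K.2 - K.1 ≤ S.2 - S.1 := hSmax (j := K) hKsub hle
  omega

omit hdvd hw2 in
lemma Jset_nw {J : ℕ × ℕ}
    (hJ : J ∈ {J | ∃ I : ℕ × ℕ, (∃ i ≤ ℓ, I ∈ Tlevel a w n i) ∧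
      MaximalWitness F n f a w ℓ I ∧ IsParent a w n ℓ I J}) :
    ¬ WitnessInterval F n f J := by
  obtain ⟨I, _, hmw, i, hiℓ, hIi, hJi1, hss⟩ := hJ
  exact hmw.2 J ⟨i, i + 1, by omega, by omega, hIi, hJi1, hss⟩

include hnomax in
lemma Snw {S : ℕ × ℕ} (hS : S ∈ Sset F n f a w ℓ) :
    ¬ WitnessInterval F n f S := by
  intro hwit
  obtain ⟨hSE, hSmax⟩ := hS
  rcases hSE with hSJ | hS0
  · exact Jset_nw ha hawn hSJ hwit
  · have hmem : S ∈ Tlevel a w n 0 := by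
      rcases hS0 with h | h
      · exact h ▸ L0_mem ha hawn hdvd hw2
      · exact h ▸ R0_mem ha hawn hdvd hw2
    obtain ⟨I, J, hfam, hmw, hpar, hi1, hi2⟩ :=
      chain ha hawn hdvd hw2 hnomax ℓ 0 (Nat.zero_le _) (by omega) S hmem hwit
    obtain ⟨i, hiℓ, hIi, hJi1, hss⟩ := hpar
    have hndI := nd ha hawn (hdvd i (by omega)) (hw2 i (by omega)) hIi
    obtain ⟨hb1, hb2, hb3⟩ := icc_ssub_elim (le_of_lt hndI.2.1) hss
    have hJE : J ∈ Eset F n f a w ℓ :=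
      Or.inl ⟨I, ⟨i, by omega, hIi⟩, hmw, ⟨i, hiℓ, hIi, hJi1, hss⟩⟩
    have := hSmax J hJE ⟨by omega, by omega⟩
    omega

include hnomax in
lemma Swd {S S' : ℕ × ℕ} (hS : S ∈ Sset F n f a w ℓ) (hS' : S' ∈ Sset F n f a w ℓ)
    {x : ℕ} (hx1 : S.1 ≤ x) (hx2 : x ≤ S.2) (hx1' : S'.1 ≤ x) (hx2' : x ≤ S'.2) :
    fill F n f S x = fill F n f S' x := by
  by_cases heq : S = S'
  · rw [heq]
  obtain ⟨m, hm, hmem⟩ := Emem ha hawn hdvd hw2 hS.1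
  obtain ⟨m', hm', hmem'⟩ := Emem ha hawn hdvd hw2 hS'.1
  have hndS := End ha hawn hdvd hw2 hS.1
  have hndS' := End ha hawn hdvd hw2 hS'.1
  have hlam := laminar ha hawn (hdvd m hm) (hw2 m hm) (hdvd m' hm') (hw2 m' hm')
    hmem hmem'
  have hnest : ¬((S'.1 ≤ S.1 ∧ S.2 ≤ S'.2) ∨ (S.1 ≤ S'.1 ∧ S'.2 ≤ S.2)) := by
    rintro (h | h)
    · have := hS.2 S' hS'.1 ⟨h.1, h.2⟩
      exact heq (Prod.ext (by omega) (by omega))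
    · have := hS'.2 S hS.1 ⟨h.1, h.2⟩
      exact heq (Prod.ext (by omega) (by omega))
  have hcase : (x = S.2 ∧ x = S'.1) ∨ (x = S'.2 ∧ x = S.1) := by
    rcases hlam with h | h | h | h
    · exact absurd (Or.inl h) hnest
    · exact absurd (Or.inr h) hnest
    · exact Or.inl ⟨by omega, by omega⟩
    · exact Or.inr ⟨by omega, by omega⟩
  have hfs := fill_spec (S := S) (Snw ha hawn hdvd hw2 hnomax hS)
  have hfs' := fill_spec (S := S') (Snw ha hawn hdvd hw2 hnomax hS')
  rcases hcase with ⟨h1, h2⟩ | ⟨h1, h2⟩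
  · have e1 : fill F n f S x = f x := by rw [h1]; exact hfs.2.1 (by omega)
    have e2 : fill F n f S' x = f x := by rw [h2]; exact hfs'.1 (by omega)
    rw [e1, e2]
  · have e1 : fill F n f S' x = f x := by rw [h1]; exact hfs'.2.1 (by omega)
    have e2 : fill F n f S x = f x := by rw [h2]; exact hfs.1 (by omega)
    rw [e1, e2]


end Main
end S12

theorem stmt_12 (ε : ℝ) (n : ℕ) (hε : 0 < ε) (hε1 : ε ≤ 1) (hn : 16 ≤ ε * n)
    (F : Set (ℝ × ℝ)) (f : ℕ → ℝ)
    (ℓ : ℕ) (hℓ : ℓ = ⌊Real.logb 2 (ε * n / 4)⌋₊)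
    (w : ℕ) (hwdvd : w % 2 ^ ℓ = 0) (hwle : (w : ℝ) ≤ n - ε * n / 4)
    (hwmax : ∀ w' : ℕ, w' % 2 ^ ℓ = 0 → (w' : ℝ) ≤ n - ε * n / 4 → w' ≤ w)
    (a : ℕ) (ha : 1 ≤ a) (ha2 : a ≤ ⌈ε * n / 4⌉₊)
    (hnomax : ∀ I ∈ Tlevel a w n ℓ, ¬ MaximalWitness F n f a w ℓ I) :
    ∃ f' : ℕ → ℝ, SatLocal F n f' ∧
      ∀ x : ℕ, 1 ≤ x → x ≤ n → x ∉ badSet F n f a w ℓ → f' x = f x := by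
  classical
  -- numeric groundwork
  have hn0 : (0:ℝ) ≤ (n:ℝ) := Nat.cast_nonneg n
  have hεn_n : ε * n ≤ n := by nlinarith
  have hx4 : (4:ℝ) ≤ ε * n / 4 := by linarith
  have hlog0 : 0 ≤ Real.logb 2 (ε * n / 4) := Real.logb_nonneg (by norm_num) (by linarith)
  have h2l : (2:ℝ) ^ (ℓ:ℕ) ≤ ε * n / 4 := by
    have hfl : (ℓ:ℝ) ≤ Real.logb 2 (ε * n / 4) := by
      rw [hℓ]; exact_mod_cast Nat.floor_le hlog0
    have h1 : (2:ℝ) ^ (ℓ:ℝ) ≤ (2:ℝ) ^ Real.logb 2 (ε * n / 4) :=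
      Real.rpow_le_rpow_of_exponent_le (by norm_num) hfl
    rw [Real.rpow_logb (by norm_num) (by norm_num) (by linarith)] at h1
    rwa [Real.rpow_natCast] at h1
  have hw2ℓ : 2 ^ (ℓ + 1) ≤ w := by
    apply hwmax
    · rw [pow_succ]; exact Nat.mul_mod_right _ _
    · push_cast
      rw [pow_succ]
      push_cast
      linarith
  have hawn : a + w ≤ n := by
    have h1 : (a:ℝ) ≤ (⌈ε * n / 4⌉₊ : ℝ) := Nat.cast_le.2 ha2
    have h2 : (⌈ε * n / 4⌉₊ : ℝ) < ε * n / 4 + 1 := Nat.ceil_lt_add_one (by linarith)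
    have h3 : ((a + w : ℕ) : ℝ) < ((n + 1 : ℕ) : ℝ) := by push_cast; linarith
    have := Nat.cast_lt.1 h3
    omega
  have hdvdA : ∀ i ≤ ℓ, 2 ^ i ∣ w := fun i hi =>
    dvd_trans (pow_dvd_pow 2 hi) (Nat.dvd_of_mod_eq_zero hwdvd)
  have hw2A : ∀ i ≤ ℓ, 2 * 2 ^ i ≤ w := by
    intro i hi
    have h1 : 2 ^ i ≤ 2 ^ ℓ := Nat.pow_le_pow_right (by norm_num) hi
    have h2 : 2 ^ (ℓ + 1) = 2 ^ ℓ * 2 := pow_succ 2 ℓ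
    omega
  have hwge2 : 2 ≤ w := by
    have := hw2A 0 (Nat.zero_le _)
    simpa using this
  -- abbreviations
  set SS := S12.Sset F n f a w ℓ with hSS
  have hP1 : ∀ S ∈ SS, ∀ x : ℕ, S.1 ≤ x → x ≤ S.2 →
      S12.patch F n f SS x = S12.fill F n f S x := by
    intro S hS x h1 h2
    have hex : ∃ S' ∈ SS, S'.1 ≤ x ∧ x ≤ S'.2 := ⟨S, hS, h1, h2⟩
    simp only [S12.patch]
    rw [dif_pos hex]
    exact S12.Swd ha hawn hdvdA hw2A hnomax hex.choose_spec.1 hS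
      hex.choose_spec.2.1 hex.choose_spec.2.2 h1 h2
  have hP2 : ∀ x : ℕ, (¬ ∃ S ∈ SS, S.1 ≤ x ∧ x ≤ S.2) →
      S12.patch F n f SS x = f x := by
    intro x h
    simp only [S12.patch]
    rw [dif_neg h]
  refine ⟨S12.patch F n f SS, ?_, ?_⟩
  · -- SatLocal
    intro i h1 h2
    by_cases hc : ∃ S ∈ SS, S.1 ≤ i ∧ i + 1 ≤ S.2
    · obtain ⟨S, hS, hb1, hb2⟩ := hc
      rw [hP1 S hS i hb1 (by omega), hP1 S hS (i + 1) (by omega) hb2]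
      exact (S12.fill_spec (S12.Snw ha hawn hdvdA hw2A hnomax hS)).2.2 i hb1 hb2
    · have hfi : S12.patch F n f SS i = f i := by
        by_cases hci : ∃ S ∈ SS, S.1 ≤ i ∧ i ≤ S.2
        · obtain ⟨S, hS, hb1, hb2⟩ := hci
          rw [hP1 S hS i hb1 hb2]
          have hi2 : i = S.2 := by
            by_contra h
            exact hc ⟨S, hS, hb1, by omega⟩
          have hfs := S12.fill_spec (S12.Snw ha hawn hdvdA hw2A hnomax hS)
          rw [hi2]
          exact hfs.2.1 (by omega)
        · exact hP2 i hci
      have hfi1 : S12.patch F n f SS (i + 1) = f (i + 1) := by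
        by_cases hci : ∃ S ∈ SS, S.1 ≤ i + 1 ∧ i + 1 ≤ S.2
        · obtain ⟨S, hS, hb1, hb2⟩ := hci
          rw [hP1 S hS (i + 1) hb1 hb2]
          have hi2 : i + 1 = S.1 := by
            by_contra h
            exact hc ⟨S, hS, by omega, hb2⟩
          have hfs := S12.fill_spec (S12.Snw ha hawn hdvdA hw2A hnomax hS)
          rw [hi2]
          exact hfs.1 (by omega)
        · exact hP2 (i + 1) hci
      rw [hfi, hfi1]
      intro hF
      apply hc
      rcases Nat.lt_or_ge i (a + 1) with hcase1 | hcase1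
      · -- left edge region
        have hL0E : (1, a + 1) ∈ S12.Eset F n f a w ℓ := Or.inr (Or.inl rfl)
        obtain ⟨S, hS, hs1, hs2⟩ := S12.Emax ha hawn hdvdA hw2A hL0E
        have hs1' : S.1 ≤ 1 := hs1
        have hs2' : a + 1 ≤ S.2 := hs2
        exact ⟨S, hS, by omega, by omega⟩
      rcases Nat.lt_or_ge i (a + w - 1) with hcase2 | hcase2
      · -- middle
        have hK : (i, i + 1) ∈ Tlevel a w n 0 := by
          apply S12.mem_Tlevel_iff.2
          left
          refine ⟨i - a, by omega, ?_, ?_⟩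
          · simp only [pow_zero, Nat.div_one]
            omega
          · simp only [pow_zero, mul_one, Prod.mk.injEq]
            omega
        have hwitK : WitnessInterval F n f (i, i + 1) := by
          intro g hg1 hg2
          have e1 : g i = f i := hg1 (by show 1 < i; omega)
          have e2 : g (i + 1) = f (i + 1) := hg2 (by show i + 1 < n; omega)
          exact ⟨i, le_refl _, le_refl _, by rw [e1, e2]; exact hF⟩
        obtain ⟨I, J, hfam, hmw, hpar, hi1, hi2⟩ :=
          S12.chain ha hawn hdvdA hw2A hnomax ℓ 0 (Nat.zero_le _) (by omega)
            (i, i + 1) hK hwitK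
        obtain ⟨i', hi'ℓ, hIi', hJi'1, hss⟩ := hpar
        have hndI := S12.nd ha hawn (hdvdA i' (by omega)) (hw2A i' (by omega)) hIi'
        obtain ⟨hb1, hb2, _⟩ := S12.icc_ssub_elim (le_of_lt hndI.2.1) hss
        have hJE : J ∈ S12.Eset F n f a w ℓ :=
          Or.inl ⟨I, ⟨i', by omega, hIi'⟩, hmw, ⟨i', hi'ℓ, hIi', hJi'1, hss⟩⟩
        obtain ⟨S, hS, hs1, hs2⟩ := S12.Emax ha hawn hdvdA hw2A hJE
        have hi1' : I.1 ≤ i := hi1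
        have hi2' : i + 1 ≤ I.2 := hi2
        exact ⟨S, hS, by omega, by omega⟩
      · -- right edge region
        have hR0E : (a + w - 1, n) ∈ S12.Eset F n f a w ℓ := Or.inr (Or.inr rfl)
        obtain ⟨S, hS, hs1, hs2⟩ := S12.Emax ha hawn hdvdA hw2A hR0E
        have hs1' : S.1 ≤ a + w - 1 := hs1
        have hs2' : n ≤ S.2 := hs2
        exact ⟨S, hS, by omega, by omega⟩
  · -- agreement off the bad set
    intro x hx1 hxn hxb
    simp only [badSet] at hxb
    have hA : x ∉ {x : ℕ | ∃ I J : ℕ × ℕ, (∃ i ≤ ℓ, I ∈ Tlevel a w n i) ∧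
        MaximalWitness F n f a w ℓ I ∧ IsParent a w n ℓ I J ∧ x ∈ interiorSet n J} :=
      fun h => hxb (Set.mem_union_left _ (Set.mem_union_left _ h))
    have hB : x ∉ Set.Icc 1 a :=
      fun h => hxb (Set.mem_union_left _ (Set.mem_union_right _ h))
    have hC : x ∉ Set.Icc (a + w) n :=
      fun h => hxb (Set.mem_union_right _ h)
    have hxa : a < x := by
      by_contra h
      push_neg at h
      exact hB (Set.mem_Icc.2 ⟨hx1, h⟩)
    have hxaw : x < a + w := by
      by_contra h
      push_neg at h
      exact hC (Set.mem_Icc.2 ⟨h, hxn⟩)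
    by_cases hcx : ∃ S ∈ SS, S.1 ≤ x ∧ x ≤ S.2
    · obtain ⟨S, hS, hb1, hb2⟩ := hcx
      rw [hP1 S hS x hb1 hb2]
      have hfs := S12.fill_spec (S12.Snw ha hawn hdvdA hw2A hnomax hS)
      rcases hS.1 with hSJ | hS0
      · obtain ⟨I, hIfam, hmw, hparS⟩ := hSJ
        have hxint : x ∉ interiorSet n S :=
          fun hin => hA ⟨I, S, hIfam, hmw, hparS, hin⟩
        have hxicc : x ∈ Set.Icc S.1 S.2 := Set.mem_Icc.2 ⟨hb1, hb2⟩
        have hx' : x ∈ (({S.1, S.2} : Set ℕ) \ ({1, n} : Set ℕ)) := by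
          by_contra h
          exact hxint ((Set.mem_diff x).2 ⟨hxicc, h⟩)
        obtain ⟨hxm, hxn'⟩ := (Set.mem_diff x).1 hx'
        simp only [Set.mem_insert_iff, Set.mem_singleton_iff] at hxm hxn'
        push_neg at hxn'
        rcases hxm with h | h
        · rw [h]
          exact hfs.1 (by omega)
        · rw [h]
          exact hfs.2.1 (by omega)
      · rcases hS0 with h | h
        · subst h
          have hb2' : x ≤ a + 1 := hb2
          have hxe : x = a + 1 := by omega
          have e : S12.fill F n f (1, a + 1) (a + 1) = f (a + 1) :=
            hfs.2.1 (show a + 1 < n by omega)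
          rw [hxe]
          exact e
        · subst h
          have hb1' : a + w - 1 ≤ x := hb1
          have hxe : x = a + w - 1 := by omega
          have e : S12.fill F n f (a + w - 1, n) (a + w - 1) = f (a + w - 1) :=
            hfs.1 (show 1 < a + w - 1 by omega)
          rw [hxe]
          exact e
    · exact hP2 x hcx
end
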